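/- arXiv:1010.1620 — 4 statements merged into one kernel-verified Lean document; each statement's English description precedes it below -/
import Mathlib

section
/- (Fischer norm of the projected elements.) Let m = p + q with p, q ≥ 1, s, k, i ∈ ℕ, let P_k be a harmonic polynomial in the u-variables homogeneous of degree k and Q_i a harmonic polynomial in the v-variables homogeneous of degree i. Let H be a harmonic polynomial (in all m variables) with |u|^{2s}·P_k·Q_i - H = r²·R for some polynomial R. Then ⟨H, H⟩ = c · ⟨P_k, P_k⟩ · ⟨Q_i, Q_i⟩ with c := 2^s · s! · ∏_{t=0}^{s-1} ((2k + p + 2t)(2i + q + 2t)/(2s + 2k + 2i + m - 2 + 2t)), where ⟨·,·⟩ is the Fischer inner product. -/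
open MvPolynomial Finset

noncomputable section

/-- The full Laplacian `ΔP = ∑ ∂_i² P`. -/
def lap (m : ℕ) (P : MvPolynomial (Fin m) ℂ) : MvPolynomial (Fin m) ℂ :=
  ∑ i, pderiv i (pderiv i P)

/-- The polynomial `r² = ∑ X_i²`. -/
def r2 (m : ℕ) : MvPolynomial (Fin m) ℂ := ∑ i, X i ^ 2

/-- The Laplacian in the `u`-variables (the first `p` variables). -/
def lapU (p q : ℕ) (F : MvPolynomial (Fin (p + q)) ℂ) : MvPolynomial (Fin (p + q)) ℂ :=
  ∑ i ∈ univ.filter (fun i : Fin (p + q) => (i : ℕ) < p), pderiv i (pderiv i F)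

/-- The Laplacian in the `v`-variables (the last `q` variables). -/
def lapV (p q : ℕ) (F : MvPolynomial (Fin (p + q)) ℂ) : MvPolynomial (Fin (p + q)) ℂ :=
  ∑ i ∈ univ.filter (fun i : Fin (p + q) => p ≤ (i : ℕ)), pderiv i (pderiv i F)

/-- `|u|² = ∑_{i<p} X_i²`. -/
def u2 (p q : ℕ) : MvPolynomial (Fin (p + q)) ℂ :=
  ∑ i ∈ univ.filter (fun i : Fin (p + q) => (i : ℕ) < p), X i ^ 2

/-- `|v|² = ∑_{i≥p} X_i²`. -/
def v2 (p q : ℕ) : MvPolynomial (Fin (p + q)) ℂ :=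
  ∑ i ∈ univ.filter (fun i : Fin (p + q) => p ≤ (i : ℕ)), X i ^ 2

/-- The Fischer inner product `⟨P,Q⟩ = ∑_α (∏_i α_i!)·conj(coeff_α P)·coeff_α Q`. -/
def fischer (m : ℕ) (P Q : MvPolynomial (Fin m) ℂ) : ℂ :=
  ∑ α ∈ P.support, (∏ i, ((α i).factorial : ℂ)) * (starRingEnd ℂ) (coeff α P) * coeff α Q

namespace Aux

/-- weight -/
def w (m : ℕ) (α : Fin m →₀ ℕ) : ℂ := ∏ i, ((α i).factorial : ℂ)

lemma fischer_def (m : ℕ) (P Q : MvPolynomial (Fin m) ℂ) :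
    fischer m P Q = ∑ α ∈ P.support, w m α * (starRingEnd ℂ) (coeff α P) * coeff α Q := rfl

lemma fischer_eq {m : ℕ} {P : MvPolynomial (Fin m) ℂ} (Q : MvPolynomial (Fin m) ℂ)
    {T : Finset (Fin m →₀ ℕ)} (hT : P.support ⊆ T) :
    fischer m P Q = ∑ α ∈ T, w m α * (starRingEnd ℂ) (coeff α P) * coeff α Q := by
  rw [fischer_def]
  exact Finset.sum_subset hT (fun α _ hα => by
    rw [MvPolynomial.notMem_support_iff] at hα
    simp [hα])

lemma fischer_zero_left {m : ℕ} (Q : MvPolynomial (Fin m) ℂ) : fischer m 0 Q = 0 := by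
  simp [fischer]

lemma fischer_zero_right {m : ℕ} (P : MvPolynomial (Fin m) ℂ) : fischer m P 0 = 0 := by
  simp [fischer]

lemma fischer_add_left {m : ℕ} (P₁ P₂ Q : MvPolynomial (Fin m) ℂ) :
    fischer m (P₁ + P₂) Q = fischer m P₁ Q + fischer m P₂ Q := by
  rw [fischer_eq (P := P₁ + P₂) Q (T := P₁.support ∪ P₂.support)
      (MvPolynomial.support_add ..), fischer_eq Q (Finset.subset_union_left),
    fischer_eq Q (Finset.subset_union_right), ← Finset.sum_add_distrib]
  refine Finset.sum_congr rfl fun α _ => ?_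
  rw [coeff_add, map_add]
  ring

lemma fischer_add_right {m : ℕ} (P Q₁ Q₂ : MvPolynomial (Fin m) ℂ) :
    fischer m P (Q₁ + Q₂) = fischer m P Q₁ + fischer m P Q₂ := by
  rw [fischer_def, fischer_def, fischer_def, ← Finset.sum_add_distrib]
  refine Finset.sum_congr rfl fun α _ => ?_
  rw [coeff_add]; ring

lemma fischer_smul_right {m : ℕ} (c : ℂ) (P Q : MvPolynomial (Fin m) ℂ) :
    fischer m P (c • Q) = c * fischer m P Q := by
  rw [fischer_def, fischer_def, Finset.mul_sum]
  refine Finset.sum_congr rfl fun α _ => ?_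
  rw [MvPolynomial.coeff_smul, smul_eq_mul]; ring

lemma fischer_smul_left {m : ℕ} (c : ℂ) (P Q : MvPolynomial (Fin m) ℂ) :
    fischer m (c • P) Q = (starRingEnd ℂ) c * fischer m P Q := by
  rw [fischer_eq (P := c • P) Q (T := P.support) MvPolynomial.support_smul, fischer_def,
    Finset.mul_sum]
  refine Finset.sum_congr rfl fun α _ => ?_
  rw [MvPolynomial.coeff_smul, smul_eq_mul, map_mul]; ring

lemma fischer_sub_left {m : ℕ} (P₁ P₂ Q : MvPolynomial (Fin m) ℂ) :
    fischer m (P₁ - P₂) Q = fischer m P₁ Q - fischer m P₂ Q := by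
  have h : P₁ - P₂ = P₁ + (-1 : ℂ) • P₂ := by
    rw [neg_one_smul]; ring
  rw [h, fischer_add_left, fischer_smul_left]
  simp; ring

lemma fischer_sum_left {m : ℕ} {ι : Type*} (T : Finset ι) (f : ι → MvPolynomial (Fin m) ℂ)
    (Q : MvPolynomial (Fin m) ℂ) :
    fischer m (∑ j ∈ T, f j) Q = ∑ j ∈ T, fischer m (f j) Q := by
  classical
  induction T using Finset.induction_on with
  | empty => simp [fischer_zero_left]
  | insert _ _ h ih => rw [Finset.sum_insert h, Finset.sum_insert h, fischer_add_left, ih]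

lemma fischer_sum_right {m : ℕ} {ι : Type*} (T : Finset ι) (P : MvPolynomial (Fin m) ℂ)
    (f : ι → MvPolynomial (Fin m) ℂ) :
    fischer m P (∑ j ∈ T, f j) = ∑ j ∈ T, fischer m P (f j) := by
  classical
  induction T using Finset.induction_on with
  | empty => simp [fischer_zero_right]
  | insert _ _ h ih => rw [Finset.sum_insert h, Finset.sum_insert h, fischer_add_right, ih]

lemma fischer_conj {m : ℕ} (P Q : MvPolynomial (Fin m) ℂ) :
    fischer m Q P = (starRingEnd ℂ) (fischer m P Q) := by
  rw [fischer_eq (P := Q) P (T := P.support ∪ Q.support) Finset.subset_union_right,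
    fischer_eq (P := P) Q (T := P.support ∪ Q.support) Finset.subset_union_left, map_sum]
  refine Finset.sum_congr rfl fun α _ => ?_
  rw [map_mul, map_mul, Complex.conj_conj]
  have : (starRingEnd ℂ) (w m α) = w m α := by
    rw [w, map_prod]
    exact Finset.prod_congr rfl fun i _ => by simp
  rw [this]; ring

lemma w_add_single {m : ℕ} (α : Fin m →₀ ℕ) (j : Fin m) :
    w m (α + Finsupp.single j 1) = ((α j : ℂ) + 1) * w m α := by
  rw [w, w, ← Finset.mul_prod_erase _ _ (Finset.mem_univ j),
    ← Finset.mul_prod_erase _ (fun i => ((α i).factorial : ℂ)) (Finset.mem_univ j)]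
  have h1 : ∀ i ∈ Finset.univ.erase j,
      ((((α + Finsupp.single j 1 : Fin m →₀ ℕ)) i).factorial : ℂ)
      = ((α i).factorial : ℂ) := by
    intro i hi
    have hij : i ≠ j := (Finset.mem_erase.mp hi).1
    rw [Finsupp.add_apply, Finsupp.single_apply, if_neg (Ne.symm hij), add_zero]
  rw [Finset.prod_congr rfl h1]
  have h2 : (α + Finsupp.single j 1 : Fin m →₀ ℕ) j = α j + 1 := by
    rw [Finsupp.add_apply, Finsupp.single_apply, if_pos rfl]
  rw [h2, Nat.factorial_succ]
  push_cast
  ring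

lemma coeff_pderiv {m : ℕ} (j : Fin m) (Q : MvPolynomial (Fin m) ℂ) (β : Fin m →₀ ℕ) :
    coeff β (pderiv j Q) = ((β j : ℂ) + 1) * coeff (β + Finsupp.single j 1) Q := by
  induction Q using MvPolynomial.induction_on' with
  | add p q hp hq => rw [map_add, coeff_add, coeff_add, hp, hq]; ring
  | monomial s a =>
    rw [pderiv_monomial, coeff_monomial, coeff_monomial]
    by_cases h : s = β + Finsupp.single j 1
    · subst h
      have h1 : β + Finsupp.single j 1 - Finsupp.single j 1 = β :=
        add_tsub_cancel_right _ _
      rw [if_pos h1, if_pos rfl]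
      have h2 : (β + Finsupp.single j 1 : Fin m →₀ ℕ) j = β j + 1 := by
        rw [Finsupp.add_apply, Finsupp.single_apply, if_pos rfl]
      rw [h2]
      push_cast; ring
    · rw [if_neg h, mul_zero]
      by_cases h' : s - Finsupp.single j 1 = β
      · rw [if_pos h']
        have hs : s j = 0 := by
          by_contra hs
          apply h
          rw [← h', tsub_add_cancel_of_le (by rw [Finsupp.single_le_iff]; omega)]
        rw [hs]
        simp
      · rw [if_neg h']

lemma fischer_X_mul {m : ℕ} (j : Fin m) (P Q : MvPolynomial (Fin m) ℂ) :
    fischer m (X j * P) Q = fischer m P (pderiv j Q) := by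
  rw [fischer_eq (P := X j * P) Q (T := (X j * P).support) (le_refl _),
    MvPolynomial.support_X_mul, Finset.sum_map, fischer_def]
  refine Finset.sum_congr rfl fun β _ => ?_
  have e1 : (addLeftEmbedding (Finsupp.single j 1)) β = Finsupp.single j 1 + β := rfl
  rw [e1, MvPolynomial.coeff_X_mul, coeff_pderiv, add_comm (Finsupp.single j 1) β,
    w_add_single]
  ring

end Aux


namespace Aux

lemma fischer_sq_X_mul {m : ℕ} (j : Fin m) (P Q : MvPolynomial (Fin m) ℂ) :
    fischer m (X j ^ 2 * P) Q = fischer m P (pderiv j (pderiv j Q)) := by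
  have h : X j ^ 2 * P = X j * (X j * P) := by ring
  rw [h, fischer_X_mul, fischer_X_mul]

lemma fischer_lap {m : ℕ} (P Q : MvPolynomial (Fin m) ℂ) :
    fischer m (r2 m * P) Q = fischer m P (lap m Q) := by
  rw [r2, Finset.sum_mul, fischer_sum_left, lap, fischer_sum_right]
  exact Finset.sum_congr rfl fun i _ => fischer_sq_X_mul i P Q

lemma fischer_lapU {p q : ℕ} (P Q : MvPolynomial (Fin (p + q)) ℂ) :
    fischer (p + q) (u2 p q * P) Q = fischer (p + q) P (lapU p q Q) := by
  rw [u2, Finset.sum_mul, fischer_sum_left, lapU, fischer_sum_right]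
  exact Finset.sum_congr rfl fun i _ => fischer_sq_X_mul i P Q

lemma fischer_self_eq_zero {m : ℕ} {P : MvPolynomial (Fin m) ℂ}
    (h : fischer m P P = 0) : P = 0 := by
  have key : fischer m P P =
      ((∑ α ∈ P.support, (∏ i, ((α i).factorial : ℝ)) * Complex.normSq (coeff α P) : ℝ) : ℂ) := by
    rw [fischer_def, Complex.ofReal_sum]
    refine Finset.sum_congr rfl fun α _ => ?_
    rw [mul_assoc, ← Complex.normSq_eq_conj_mul_self, Complex.ofReal_mul, w,
      Complex.ofReal_prod]
    norm_num
  rw [key, Complex.ofReal_eq_zero] at h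
  have hnn : ∀ α ∈ P.support, 0 ≤ (∏ i, ((α i).factorial : ℝ)) * Complex.normSq (coeff α P) :=
    fun α _ => mul_nonneg (Finset.prod_nonneg fun i _ => by positivity) (Complex.normSq_nonneg _)
  have hz := (Finset.sum_eq_zero_iff_of_nonneg hnn).mp h
  rw [← MvPolynomial.support_eq_empty, Finset.eq_empty_iff_forall_notMem]
  intro α hα
  have h1 := hz α hα
  have h2 : (0:ℝ) < ∏ i, ((α i).factorial : ℝ) := Finset.prod_pos fun i _ => by positivity
  have h3 : Complex.normSq (coeff α P) = 0 := by
    rcases mul_eq_zero.mp h1 with h | h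
    · exact absurd h (ne_of_gt h2)
    · exact h
  exact (MvPolynomial.mem_support_iff.mp hα) (Complex.normSq_eq_zero.mp h3)

/-- degree of a multi-index of a homogeneous polynomial -/
lemma degree_of_homogeneous {m n : ℕ} {F : MvPolynomial (Fin m) ℂ} (hF : F.IsHomogeneous n)
    {β : Fin m →₀ ℕ} (hβ : coeff β F ≠ 0) : ∑ i, β i = n := by
  have h := hF hβ
  change (Finsupp.weight (fun _ => 1)) β = n at h
  rw [← Finsupp.degree_eq_weight_one] at h
  rw [← h, Finsupp.degree_apply]
  exact (Finset.sum_subset (Finset.subset_univ _)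
    (fun i _ hi => Finsupp.notMem_support_iff.mp hi)).symm

lemma euler {m n : ℕ} {F : MvPolynomial (Fin m) ℂ} (hF : F.IsHomogeneous n) :
    ∑ i, X i * pderiv i F = (n : ℂ) • F := by
  apply MvPolynomial.ext
  intro β
  rw [MvPolynomial.coeff_sum]
  have hterm : ∀ i : Fin m, coeff β (X i * pderiv i F) = (β i : ℂ) * coeff β F := by
    intro i
    rw [MvPolynomial.coeff_X_mul']
    by_cases hi : i ∈ β.support
    · rw [if_pos hi, coeff_pderiv]
      have hβi : 1 ≤ β i := by
        have := Finsupp.mem_support_iff.mp hi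
        omega
      have h1 : β - Finsupp.single i 1 + Finsupp.single i 1 = β :=
        tsub_add_cancel_of_le (by rw [Finsupp.single_le_iff]; omega)
      have h2 : (β - Finsupp.single i 1 : Fin m →₀ ℕ) i = β i - 1 := by
        rw [Finsupp.tsub_apply, Finsupp.single_apply, if_pos rfl]
      rw [h1, h2]
      congr 1
      push_cast [Nat.cast_sub hβi]
      ring
    · rw [if_neg hi]
      have : β i = 0 := Finsupp.notMem_support_iff.mp hi
      rw [this]
      simp
  rw [Finset.sum_congr rfl (fun i _ => hterm i), ← Finset.sum_mul, MvPolynomial.coeff_smul,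
    smul_eq_mul]
  by_cases hc : coeff β F = 0
  · rw [hc, mul_zero, mul_zero]
  · congr 1
    rw [← degree_of_homogeneous hF hc]
    push_cast
    ring

lemma pderiv_eq_zero_of_supported {m : ℕ} {S : Set (Fin m)} {F : MvPolynomial (Fin m) ℂ}
    (hF : F ∈ MvPolynomial.supported ℂ S) {j : Fin m} (hj : j ∉ S) : pderiv j F = 0 :=
  MvPolynomial.pderiv_eq_zero_of_notMem_vars
    (fun hmem => hj (MvPolynomial.mem_supported.mp hF hmem))

lemma euler_u {p q n : ℕ} {F : MvPolynomial (Fin (p + q)) ℂ}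
    (hsupp : F ∈ MvPolynomial.supported ℂ {j : Fin (p + q) | (j : ℕ) < p})
    (hF : F.IsHomogeneous n) :
    ∑ i ∈ univ.filter (fun i : Fin (p + q) => (i : ℕ) < p), X i * pderiv i F = (n : ℂ) • F := by
  rw [← euler hF, eq_comm,
    ← Finset.sum_filter_add_sum_filter_not univ (fun i : Fin (p + q) => (i : ℕ) < p)]
  have h0 : ∀ i ∈ univ.filter (fun i : Fin (p + q) => ¬ (i : ℕ) < p),
      X i * pderiv i F = 0 := by
    intro i hi
    have : ¬ ((i : ℕ) < p) := (Finset.mem_filter.mp hi).2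
    rw [pderiv_eq_zero_of_supported hsupp (by simpa using this), mul_zero]
  rw [Finset.sum_congr rfl h0, Finset.sum_const_zero, add_zero]

lemma euler_v {p q n : ℕ} {F : MvPolynomial (Fin (p + q)) ℂ}
    (hsupp : F ∈ MvPolynomial.supported ℂ {j : Fin (p + q) | p ≤ (j : ℕ)})
    (hF : F.IsHomogeneous n) :
    ∑ i ∈ univ.filter (fun i : Fin (p + q) => p ≤ (i : ℕ)), X i * pderiv i F = (n : ℂ) • F := by
  rw [← euler hF, eq_comm,
    ← Finset.sum_filter_add_sum_filter_not univ (fun i : Fin (p + q) => p ≤ (i : ℕ))]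
  have h0 : ∀ i ∈ univ.filter (fun i : Fin (p + q) => ¬ p ≤ (i : ℕ)),
      X i * pderiv i F = 0 := by
    intro i hi
    have : ¬ (p ≤ (i : ℕ)) := (Finset.mem_filter.mp hi).2
    rw [pderiv_eq_zero_of_supported hsupp (by simpa using this), mul_zero]
  rw [Finset.sum_congr rfl h0, Finset.sum_const_zero, add_zero]

lemma card_filter_lt (p q : ℕ) :
    (univ.filter (fun i : Fin (p + q) => (i : ℕ) < p)).card = p := by
  have h : univ.filter (fun i : Fin (p + q) => (i : ℕ) < p)
      = Finset.map (Fin.castAddEmb q) univ := by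
    ext x
    simp only [Finset.mem_filter, Finset.mem_univ, true_and, Finset.mem_map]
    constructor
    · intro hx
      refine ⟨⟨(x : ℕ), hx⟩, ?_⟩
      apply Fin.ext
      simp [Fin.castAddEmb]
    · rintro ⟨a, rfl⟩
      simpa [Fin.castAddEmb] using a.isLt
  rw [h, Finset.card_map, Finset.card_univ, Fintype.card_fin]

lemma card_filter_ge (p q : ℕ) :
    (univ.filter (fun i : Fin (p + q) => p ≤ (i : ℕ))).card = q := by
  have h : univ.filter (fun i : Fin (p + q) => p ≤ (i : ℕ))
      = Finset.map ((Fin.natAddEmb p) : Fin q ↪ Fin (p + q)) univ := by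
    ext x
    simp only [Finset.mem_filter, Finset.mem_univ, true_and, Finset.mem_map]
    constructor
    · intro hx
      refine ⟨⟨(x : ℕ) - p, by omega⟩, ?_⟩
      apply Fin.ext
      show p + ((x : ℕ) - p) = (x : ℕ)
      omega
    · rintro ⟨a, rfl⟩
      exact Nat.le_add_right p (a : ℕ)
  rw [h, Finset.card_map, Finset.card_univ, Fintype.card_fin]

end Aux

namespace Aux

lemma hom_cast {m n n' : ℕ} {F : MvPolynomial (Fin m) ℂ} (h : F.IsHomogeneous n)
    (e : n = n') : F.IsHomogeneous n' := e ▸ h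

lemma lap_eq_lapU_add_lapV {p q : ℕ} (F : MvPolynomial (Fin (p + q)) ℂ) :
    lap (p + q) F = lapU p q F + lapV p q F := by
  rw [lap, lapU, lapV,
    ← Finset.sum_filter_add_sum_filter_not univ (fun i : Fin (p + q) => (i : ℕ) < p)]
  congr 1
  refine Finset.sum_congr (Finset.filter_congr fun x _ => ?_) fun _ _ => rfl
  simp [not_lt]

lemma lapU_mul_right {p q : ℕ} {A M : MvPolynomial (Fin (p + q)) ℂ}
    (hM : ∀ i : Fin (p + q), (i : ℕ) < p → pderiv i M = 0) :
    lapU p q (A * M) = lapU p q A * M := by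
  rw [lapU, lapU, Finset.sum_mul]
  refine Finset.sum_congr rfl fun j hj => ?_
  have hj' : (j : ℕ) < p := (Finset.mem_filter.mp hj).2
  rw [pderiv_mul, hM j hj', mul_zero, add_zero, pderiv_mul, hM j hj', mul_zero, add_zero]

lemma lapV_mul_left {p q : ℕ} {A M : MvPolynomial (Fin (p + q)) ℂ}
    (hA : ∀ i : Fin (p + q), p ≤ (i : ℕ) → pderiv i A = 0) :
    lapV p q (A * M) = A * lapV p q M := by
  rw [lapV, lapV, Finset.mul_sum]
  refine Finset.sum_congr rfl fun j hj => ?_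
  have hj' : p ≤ (j : ℕ) := (Finset.mem_filter.mp hj).2
  rw [pderiv_mul, hA j hj', zero_mul, zero_add, pderiv_mul, hA j hj', zero_mul, zero_add]

lemma u2_mem_supported {p q : ℕ} :
    u2 p q ∈ MvPolynomial.supported ℂ {j : Fin (p + q) | (j : ℕ) < p} := by
  rw [u2]
  refine Subalgebra.sum_mem _ fun j hj => ?_
  exact Subalgebra.pow_mem (MvPolynomial.supported ℂ {j : Fin (p + q) | (j : ℕ) < p})
    (MvPolynomial.X_mem_supported.mpr (Set.mem_setOf.mpr (Finset.mem_filter.mp hj).2)) 2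

lemma v2_mem_supported {p q : ℕ} :
    v2 p q ∈ MvPolynomial.supported ℂ {j : Fin (p + q) | p ≤ (j : ℕ)} := by
  rw [v2]
  refine Subalgebra.sum_mem _ fun j hj => ?_
  exact Subalgebra.pow_mem (MvPolynomial.supported ℂ {j : Fin (p + q) | p ≤ (j : ℕ)})
    (MvPolynomial.X_mem_supported.mpr (Set.mem_setOf.mpr (Finset.mem_filter.mp hj).2)) 2

lemma u2_isHomogeneous {p q : ℕ} : (u2 p q).IsHomogeneous 2 := by
  rw [u2]
  exact MvPolynomial.IsHomogeneous.sum _ _ 2 fun j _ => MvPolynomial.isHomogeneous_X_pow _ _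

lemma v2_isHomogeneous {p q : ℕ} : (v2 p q).IsHomogeneous 2 := by
  rw [v2]
  exact MvPolynomial.IsHomogeneous.sum _ _ 2 fun j _ => MvPolynomial.isHomogeneous_X_pow _ _

lemma pderiv_u2 {p q : ℕ} {i : Fin (p + q)} (hi : (i : ℕ) < p) :
    pderiv i (u2 p q) = C 2 * X i := by
  rw [u2, map_sum]
  rw [Finset.sum_eq_single_of_mem i (Finset.mem_filter.mpr ⟨Finset.mem_univ _, hi⟩)
    (fun j _ hji => by rw [pderiv_pow, pderiv_X_of_ne hji, mul_zero])]
  rw [pderiv_pow, pderiv_X_self, mul_one, map_ofNat]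
  norm_num

lemma pderiv_v2 {p q : ℕ} {i : Fin (p + q)} (hi : p ≤ (i : ℕ)) :
    pderiv i (v2 p q) = C 2 * X i := by
  rw [v2, map_sum]
  rw [Finset.sum_eq_single_of_mem i (Finset.mem_filter.mpr ⟨Finset.mem_univ _, hi⟩)
    (fun j _ hji => by rw [pderiv_pow, pderiv_X_of_ne hji, mul_zero])]
  rw [pderiv_pow, pderiv_X_self, mul_one, map_ofNat]
  norm_num

lemma lapU_u2_mul {p q n : ℕ} {G : MvPolynomial (Fin (p + q)) ℂ}
    (hsupp : G ∈ MvPolynomial.supported ℂ {j : Fin (p + q) | (j : ℕ) < p})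
    (hhom : G.IsHomogeneous n) :
    lapU p q (u2 p q * G) = (2 * (p : ℂ) + 4 * (n : ℂ)) • G + u2 p q * lapU p q G := by
  have key : ∀ j : Fin (p + q), (j : ℕ) < p →
      pderiv j (pderiv j (u2 p q * G)) =
        2 * G + 4 * (X j * pderiv j G) + u2 p q * pderiv j (pderiv j G) := by
    intro j hj
    simp only [pderiv_mul, pderiv_u2 hj, map_add, pderiv_C, pderiv_X_self]
    simp only [map_ofNat]
    ring
  rw [lapU]
  rw [Finset.sum_congr rfl (fun j hj => key j (Finset.mem_filter.mp hj).2)]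
  rw [Finset.sum_add_distrib, Finset.sum_add_distrib, Finset.sum_const, ← Finset.mul_sum,
    ← Finset.mul_sum, euler_u hsupp hhom, card_filter_lt]
  rw [lapU, nsmul_eq_mul, MvPolynomial.smul_eq_C_mul, MvPolynomial.smul_eq_C_mul,
    ← MvPolynomial.C_eq_coe_nat, map_add, map_mul, map_mul, map_ofNat, map_ofNat]
  ring

lemma lapV_v2_mul {p q n : ℕ} {G : MvPolynomial (Fin (p + q)) ℂ}
    (hsupp : G ∈ MvPolynomial.supported ℂ {j : Fin (p + q) | p ≤ (j : ℕ)})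
    (hhom : G.IsHomogeneous n) :
    lapV p q (v2 p q * G) = (2 * (q : ℂ) + 4 * (n : ℂ)) • G + v2 p q * lapV p q G := by
  have key : ∀ j : Fin (p + q), p ≤ (j : ℕ) →
      pderiv j (pderiv j (v2 p q * G)) =
        2 * G + 4 * (X j * pderiv j G) + v2 p q * pderiv j (pderiv j G) := by
    intro j hj
    simp only [pderiv_mul, pderiv_v2 hj, map_add, pderiv_C, pderiv_X_self]
    simp only [map_ofNat]
    ring
  rw [lapV]
  rw [Finset.sum_congr rfl (fun j hj => key j (Finset.mem_filter.mp hj).2)]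
  rw [Finset.sum_add_distrib, Finset.sum_add_distrib, Finset.sum_const, ← Finset.mul_sum,
    ← Finset.mul_sum, euler_v hsupp hhom, card_filter_ge]
  rw [lapV, nsmul_eq_mul, MvPolynomial.smul_eq_C_mul, MvPolynomial.smul_eq_C_mul,
    ← MvPolynomial.C_eq_coe_nat, map_add, map_mul, map_mul, map_ofNat, map_ofNat]
  ring

end Aux

namespace Aux

lemma fischer_lapV {p q : ℕ} (P Q : MvPolynomial (Fin (p + q)) ℂ) :
    fischer (p + q) (v2 p q * P) Q = fischer (p + q) P (lapV p q Q) := by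
  rw [v2, Finset.sum_mul, fischer_sum_left, lapV, fischer_sum_right]
  exact Finset.sum_congr rfl fun i _ => fischer_sq_X_mul i P Q

lemma lapV_eq_zero_of_usupported {p q : ℕ} {F : MvPolynomial (Fin (p + q)) ℂ}
    (hF : F ∈ MvPolynomial.supported ℂ {j : Fin (p + q) | (j : ℕ) < p}) :
    lapV p q F = 0 := by
  rw [lapV]
  refine Finset.sum_eq_zero fun j hj => ?_
  have hj' : p ≤ (j : ℕ) := (Finset.mem_filter.mp hj).2
  rw [pderiv_eq_zero_of_supported hF (by simp; omega), map_zero]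

lemma lapU_eq_zero_of_vsupported {p q : ℕ} {F : MvPolynomial (Fin (p + q)) ℂ}
    (hF : F ∈ MvPolynomial.supported ℂ {j : Fin (p + q) | p ≤ (j : ℕ)}) :
    lapU p q F = 0 := by
  rw [lapU]
  refine Finset.sum_eq_zero fun j hj => ?_
  have hj' : (j : ℕ) < p := (Finset.mem_filter.mp hj).2
  rw [pderiv_eq_zero_of_supported hF (by simp; omega), map_zero]

lemma r2_eq_u2_add_v2 (p q : ℕ) : r2 (p + q) = u2 p q + v2 p q := by
  rw [r2, u2, v2,
    ← Finset.sum_filter_add_sum_filter_not univ (fun i : Fin (p + q) => (i : ℕ) < p)]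
  congr 1
  refine Finset.sum_congr (Finset.filter_congr fun x _ => ?_) fun _ _ => rfl
  simp [not_lt]

lemma lap_smul {m : ℕ} (c : ℂ) (F : MvPolynomial (Fin m) ℂ) :
    lap m (c • F) = c • lap m F := by
  rw [lap, lap, Finset.smul_sum]
  exact Finset.sum_congr rfl fun j _ => by rw [Derivation.map_smul, Derivation.map_smul]

lemma lap_sum {m : ℕ} {ι : Type*} (T : Finset ι) (f : ι → MvPolynomial (Fin m) ℂ) :
    lap m (∑ j ∈ T, f j) = ∑ j ∈ T, lap m (f j) := by
  rw [lap]
  have h : ∀ i : Fin m, pderiv i (pderiv i (∑ j ∈ T, f j))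
      = ∑ j ∈ T, pderiv i (pderiv i (f j)) := by
    intro i
    rw [map_sum, map_sum]
  rw [Finset.sum_congr rfl (fun i _ => h i), Finset.sum_comm]
  exact Finset.sum_congr rfl fun j _ => rfl

lemma lap_sub {m : ℕ} (F G : MvPolynomial (Fin m) ℂ) :
    lap m (F - G) = lap m F - lap m G := by
  rw [lap, lap, lap, ← Finset.sum_sub_distrib]
  exact Finset.sum_congr rfl fun j _ => by rw [map_sub, map_sub]

def muC (k p a : ℕ) : ℂ := 2 * ((a : ℂ) + 1) * (2 * (k : ℂ) + (p : ℂ) + 2 * (a : ℂ))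

lemma lapU_u2_pow {p q k : ℕ} {Pk : MvPolynomial (Fin (p + q)) ℂ}
    (hsupp : Pk ∈ MvPolynomial.supported ℂ {j : Fin (p + q) | (j : ℕ) < p})
    (hlap : lapU p q Pk = 0) (hhom : Pk.IsHomogeneous k) :
    ∀ a : ℕ, lapU p q (u2 p q ^ (a + 1) * Pk) = muC k p a • (u2 p q ^ a * Pk) := by
  intro a
  induction a with
  | zero =>
    have h1 : u2 p q ^ 1 * Pk = u2 p q * Pk := by rw [pow_one]
    rw [h1, lapU_u2_mul hsupp hhom, hlap, mul_zero, add_zero, pow_zero, one_mul, muC]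
    congr 1
    push_cast
    ring
  | succ a ih =>
    have hsupp' : u2 p q ^ (a + 1) * Pk ∈
        MvPolynomial.supported ℂ {j : Fin (p + q) | (j : ℕ) < p} :=
      Subalgebra.mul_mem _ (Subalgebra.pow_mem _ u2_mem_supported _) hsupp
    have hhom' : (u2 p q ^ (a + 1) * Pk).IsHomogeneous (2 * (a + 1) + k) :=
      (u2_isHomogeneous.pow (a + 1)).mul hhom
    have e : u2 p q ^ (a + 1 + 1) * Pk = u2 p q * (u2 p q ^ (a + 1) * Pk) := by ring
    rw [e, lapU_u2_mul hsupp' hhom', ih, mul_smul_comm]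
    have e2 : u2 p q * (u2 p q ^ a * Pk) = u2 p q ^ (a + 1) * Pk := by ring
    rw [e2, ← add_smul]
    congr 1
    rw [muC, muC]
    push_cast
    ring

def nuC (i q b : ℕ) : ℂ := 2 * ((b : ℂ) + 1) * (2 * (i : ℂ) + (q : ℂ) + 2 * (b : ℂ))

lemma lapV_v2_pow {p q i : ℕ} {Qi : MvPolynomial (Fin (p + q)) ℂ}
    (hsupp : Qi ∈ MvPolynomial.supported ℂ {j : Fin (p + q) | p ≤ (j : ℕ)})
    (hlap : lapV p q Qi = 0) (hhom : Qi.IsHomogeneous i) :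
    ∀ b : ℕ, lapV p q (v2 p q ^ (b + 1) * Qi) = nuC i q b • (v2 p q ^ b * Qi) := by
  intro b
  induction b with
  | zero =>
    have h1 : v2 p q ^ 1 * Qi = v2 p q * Qi := by rw [pow_one]
    rw [h1, lapV_v2_mul hsupp hhom, hlap, mul_zero, add_zero, pow_zero, one_mul, nuC]
    congr 1
    push_cast
    ring
  | succ b ih =>
    have hsupp' : v2 p q ^ (b + 1) * Qi ∈
        MvPolynomial.supported ℂ {j : Fin (p + q) | p ≤ (j : ℕ)} :=
      Subalgebra.mul_mem _ (Subalgebra.pow_mem _ v2_mem_supported _) hsupp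
    have hhom' : (v2 p q ^ (b + 1) * Qi).IsHomogeneous (2 * (b + 1) + i) :=
      (v2_isHomogeneous.pow (b + 1)).mul hhom
    have e : v2 p q ^ (b + 1 + 1) * Qi = v2 p q * (v2 p q ^ (b + 1) * Qi) := by ring
    rw [e, lapV_v2_mul hsupp' hhom', ih, mul_smul_comm]
    have e2 : v2 p q * (v2 p q ^ b * Qi) = v2 p q ^ (b + 1) * Qi := by ring
    rw [e2, ← add_smul]
    congr 1
    rw [nuC, nuC]
    push_cast
    ring

end Aux

namespace Aux

lemma coeff_vanish_outside {m : ℕ} {S : Set (Fin m)} {F : MvPolynomial (Fin m) ℂ}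
    (hF : F ∈ MvPolynomial.supported ℂ S) {β : Fin m →₀ ℕ} (hβ : coeff β F ≠ 0)
    {j : Fin m} (hj : j ∉ S) : β j = 0 := by
  by_contra hne
  apply hj
  apply MvPolynomial.mem_supported.mp hF
  rw [Finset.mem_coe, MvPolynomial.mem_vars]
  exact ⟨β, MvPolynomial.mem_support_iff.mpr hβ, Finsupp.mem_support_iff.mpr hne⟩

lemma coeff_mul_of_disjoint {p q : ℕ} {P Q : MvPolynomial (Fin (p + q)) ℂ}
    (hP : P ∈ MvPolynomial.supported ℂ {j : Fin (p + q) | (j : ℕ) < p})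
    (hQ : Q ∈ MvPolynomial.supported ℂ {j : Fin (p + q) | p ≤ (j : ℕ)})
    (α : Fin (p + q) →₀ ℕ) :
    coeff α (P * Q) = coeff (α.filter (fun j : Fin (p + q) => (j : ℕ) < p)) P *
      coeff (α.filter (fun j : Fin (p + q) => ¬ (j : ℕ) < p)) Q := by
  classical
  rw [MvPolynomial.coeff_mul]
  have hsum : α.filter (fun j : Fin (p + q) => (j : ℕ) < p)
      + α.filter (fun j : Fin (p + q) => ¬ (j : ℕ) < p) = α :=
    Finsupp.filter_pos_add_filter_neg α _
  rw [Finset.sum_eq_single (α.filter (fun j : Fin (p + q) => (j : ℕ) < p),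
      α.filter (fun j : Fin (p + q) => ¬ (j : ℕ) < p))]
  · intro b hb hne
    by_cases h1 : coeff b.1 P = 0
    · rw [h1, zero_mul]
    by_cases h2 : coeff b.2 Q = 0
    · rw [h2, mul_zero]
    exfalso
    apply hne
    have hadd : b.1 + b.2 = α := Finset.HasAntidiagonal.mem_antidiagonal.mp hb
    have e1 : b.1 = α.filter (fun j : Fin (p + q) => (j : ℕ) < p) := by
      ext j
      rw [Finsupp.filter_apply]
      by_cases hj : (j : ℕ) < p
      · rw [if_pos hj, ← hadd, Finsupp.add_apply,
          coeff_vanish_outside hQ h2 (by simp; omega), add_zero]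
      · rw [if_neg hj, coeff_vanish_outside hP h1 (by simp; omega)]
    have e2 : b.2 = α.filter (fun j : Fin (p + q) => ¬ (j : ℕ) < p) := by
      ext j
      rw [Finsupp.filter_apply]
      by_cases hj : (j : ℕ) < p
      · rw [if_neg (by simpa using hj), coeff_vanish_outside hQ h2 (by simp; omega)]
      · rw [if_pos hj, ← hadd, Finsupp.add_apply,
          coeff_vanish_outside hP h1 (by simp; omega), zero_add]
    exact Prod.ext e1 e2
  · intro hmem
    exact absurd (Finset.HasAntidiagonal.mem_antidiagonal.mpr hsum) hmem

lemma w_add_of_disjoint {m : ℕ} {β γ : Fin m →₀ ℕ} (h : ∀ j, β j = 0 ∨ γ j = 0) :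
    w m (β + γ) = w m β * w m γ := by
  rw [w, w, w, ← Finset.prod_mul_distrib]
  refine Finset.prod_congr rfl fun j _ => ?_
  have : (β + γ : Fin m →₀ ℕ) j = β j + γ j := Finsupp.add_apply β γ j
  rw [this]
  rcases h j with h0 | h0 <;> rw [h0] <;> simp

lemma fischer_mul_of_disjoint {p q : ℕ} {P Q : MvPolynomial (Fin (p + q)) ℂ}
    (hP : P ∈ MvPolynomial.supported ℂ {j : Fin (p + q) | (j : ℕ) < p})
    (hQ : Q ∈ MvPolynomial.supported ℂ {j : Fin (p + q) | p ≤ (j : ℕ)}) :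
    fischer (p + q) (P * Q) (P * Q) = fischer (p + q) P P * fischer (p + q) Q Q := by
  classical
  set uP : Fin (p + q) → Prop := fun j => (j : ℕ) < p with huP
  -- every coeff of P is supported inside uP, of Q outside
  have hPz : ∀ {β : Fin (p + q) →₀ ℕ}, coeff β P ≠ 0 → ∀ j, ¬ uP j → β j = 0 := by
    intro β hβ j hj
    exact coeff_vanish_outside hP hβ (by simp only [Set.mem_setOf_eq]; rw [huP] at hj; omega)
  have hQz : ∀ {γ : Fin (p + q) →₀ ℕ}, coeff γ Q ≠ 0 → ∀ j, uP j → γ j = 0 := by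
    intro γ hγ j hj
    exact coeff_vanish_outside hQ hγ (by simp only [Set.mem_setOf_eq]; rw [huP] at hj; omega)
  set T : Finset (Fin (p + q) →₀ ℕ) :=
    Finset.image (fun x : (Fin (p + q) →₀ ℕ) × (Fin (p + q) →₀ ℕ) => x.1 + x.2)
      (P.support ×ˢ Q.support) with hT
  have hsub : (P * Q).support ⊆ T := by
    intro α hα
    have hcoeff := MvPolynomial.mem_support_iff.mp hα
    rw [coeff_mul_of_disjoint hP hQ] at hcoeff
    have h1 : coeff (α.filter uP) P ≠ 0 := fun h => hcoeff (by rw [h, zero_mul])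
    have h2 : coeff (α.filter (fun j => ¬ uP j)) Q ≠ 0 := fun h => hcoeff (by rw [h, mul_zero])
    rw [hT]
    apply Finset.mem_image.mpr
    refine ⟨(α.filter uP, α.filter (fun j => ¬ uP j)), ?_, ?_⟩
    · exact Finset.mem_product.mpr ⟨MvPolynomial.mem_support_iff.mpr h1,
        MvPolynomial.mem_support_iff.mpr h2⟩
    · exact Finsupp.filter_pos_add_filter_neg α _
  rw [fischer_eq _ hsub, hT, Finset.sum_image ?hinj]
  case hinj =>
    intro x hx y hy hxy
    have hx' := Finset.mem_product.mp hx
    have hy' := Finset.mem_product.mp hy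
    have hx1 := MvPolynomial.mem_support_iff.mp hx'.1
    have hx2 := MvPolynomial.mem_support_iff.mp hx'.2
    have hy1 := MvPolynomial.mem_support_iff.mp hy'.1
    have hy2 := MvPolynomial.mem_support_iff.mp hy'.2
    have happ : ∀ j, x.1 j + x.2 j = y.1 j + y.2 j := by
      intro j
      have := congrArg (fun z => z j) hxy
      simpa [Finsupp.add_apply] using this
    have e1 : x.1 = y.1 := by
      ext j
      by_cases hj : uP j
      · have := happ j
        rw [hQz hx2 j hj, hQz hy2 j hj] at this
        omega
      · rw [hPz hx1 j hj, hPz hy1 j hj]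
    have e2 : x.2 = y.2 := by
      ext j
      by_cases hj : uP j
      · rw [hQz hx2 j hj, hQz hy2 j hj]
      · have := happ j
        rw [hPz hx1 j hj, hPz hy1 j hj] at this
        omega
    exact Prod.ext e1 e2
  -- now pointwise rewrite
  rw [fischer_def, fischer_def, Finset.sum_mul_sum, ← Finset.sum_product']
  refine Finset.sum_congr rfl fun x hx => ?_
  have hx' := Finset.mem_product.mp hx
  have hx1 := MvPolynomial.mem_support_iff.mp hx'.1
  have hx2 := MvPolynomial.mem_support_iff.mp hx'.2
  have hdisj : ∀ j, x.1 j = 0 ∨ x.2 j = 0 := by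
    intro j
    by_cases hj : uP j
    · exact Or.inr (hQz hx2 j hj)
    · exact Or.inl (hPz hx1 j hj)
  have hfilter1 : (x.1 + x.2).filter uP = x.1 := by
    ext j
    rw [Finsupp.filter_apply]
    by_cases hj : uP j
    · rw [if_pos hj, Finsupp.add_apply, hQz hx2 j hj, add_zero]
    · rw [if_neg hj, hPz hx1 j hj]
  have hfilter2 : (x.1 + x.2).filter (fun j => ¬ uP j) = x.2 := by
    ext j
    rw [Finsupp.filter_apply]
    by_cases hj : uP j
    · rw [if_neg (by simpa using hj), hQz hx2 j hj]
    · rw [if_pos hj, Finsupp.add_apply, hPz hx1 j hj, zero_add]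
  have hc : coeff (x.1 + x.2) (P * Q) = coeff x.1 P * coeff x.2 Q := by
    rw [coeff_mul_of_disjoint hP hQ, hfilter1, hfilter2]
  rw [hc, w_add_of_disjoint hdisj, map_mul]
  ring

end Aux

namespace Aux

lemma keyF (s : ℕ) : ∀ a b : ℂ,
    (∑ j ∈ range (s + 1), (s.choose j : ℂ) *
        (∏ t ∈ Ico (s - j) s, (a + 2 * (t : ℂ))) * ∏ t ∈ Ico j s, (b + 2 * (t : ℂ)))
      = ∏ t ∈ range s, (a + b + 2 * (s : ℂ) - 2 + 2 * (t : ℂ)) := by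
  induction s with
  | zero => intro a b; simp
  | succ s ih =>
    intro a b
    -- abbreviations (as plain functions)
    have h1 := Finset.sum_range_succ' (fun j => ((s + 1).choose j : ℂ) *
        (∏ t ∈ Ico (s + 1 - j) (s + 1), (a + 2 * (t : ℂ))) *
        ∏ t ∈ Ico j (s + 1), (b + 2 * (t : ℂ))) (s + 1)
    rw [h1]
    -- the j = 0 term
    have h0 : ((s + 1).choose 0 : ℂ) *
        (∏ t ∈ Ico (s + 1 - 0) (s + 1), (a + 2 * (t : ℂ))) *
        ∏ t ∈ Ico 0 (s + 1), (b + 2 * (t : ℂ))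
        = ∏ t ∈ range (s + 1), (b + 2 * (t : ℂ)) := by
      rw [Nat.choose_zero_right, Nat.sub_zero, Finset.Ico_self, Finset.prod_empty,
        Nat.Ico_zero_eq_range]
      push_cast
      ring
    rw [h0]
    -- pascal on the shifted terms
    have h2 : ∀ j ∈ range (s + 1), ((s + 1).choose (j + 1) : ℂ) *
        (∏ t ∈ Ico (s + 1 - (j + 1)) (s + 1), (a + 2 * (t : ℂ))) *
        ∏ t ∈ Ico (j + 1) (s + 1), (b + 2 * (t : ℂ))
        = (s.choose j : ℂ) *
            (∏ t ∈ Ico (s - j) (s + 1), (a + 2 * (t : ℂ))) *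
            (∏ t ∈ Ico (j + 1) (s + 1), (b + 2 * (t : ℂ)))
          + (s.choose (j + 1) : ℂ) *
            (∏ t ∈ Ico (s - j) (s + 1), (a + 2 * (t : ℂ))) *
            (∏ t ∈ Ico (j + 1) (s + 1), (b + 2 * (t : ℂ))) := by
      intro j hj
      have e1 : s + 1 - (j + 1) = s - j := by omega
      rw [e1, Nat.choose_succ_succ]
      push_cast
      ring
    have h2' := Finset.sum_congr rfl h2
    rw [h2', Finset.sum_add_distrib]
    -- identity for S1 : shift of summation index
    have hS1 : (∑ j ∈ range (s + 1), (s.choose (j + 1) : ℂ) *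
          (∏ t ∈ Ico (s - j) (s + 1), (a + 2 * (t : ℂ))) *
          (∏ t ∈ Ico (j + 1) (s + 1), (b + 2 * (t : ℂ))))
          + ∏ t ∈ range (s + 1), (b + 2 * (t : ℂ))
        = ∑ j ∈ range (s + 1), (s.choose j : ℂ) *
          (∏ t ∈ Ico (s + 1 - j) (s + 1), (a + 2 * (t : ℂ))) *
          (∏ t ∈ Ico j (s + 1), (b + 2 * (t : ℂ))) := by
      have g1 := Finset.sum_range_succ' (fun j => (s.choose j : ℂ) *
          (∏ t ∈ Ico (s + 1 - j) (s + 1), (a + 2 * (t : ℂ))) *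
          ∏ t ∈ Ico j (s + 1), (b + 2 * (t : ℂ))) (s + 1)
      have g2 := Finset.sum_range_succ (fun j => (s.choose j : ℂ) *
          (∏ t ∈ Ico (s + 1 - j) (s + 1), (a + 2 * (t : ℂ))) *
          ∏ t ∈ Ico j (s + 1), (b + 2 * (t : ℂ))) (s + 1)
      have hz : (s.choose (s + 1) : ℂ) *
          (∏ t ∈ Ico (s + 1 - (s + 1)) (s + 1), (a + 2 * (t : ℂ))) *
          ∏ t ∈ Ico (s + 1) (s + 1), (b + 2 * (t : ℂ)) = 0 := by
        rw [Nat.choose_succ_self]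
        push_cast
        ring
      have e3 : ∀ j ∈ range (s + 1), (s.choose (j + 1) : ℂ) *
          (∏ t ∈ Ico (s + 1 - (j + 1)) (s + 1), (a + 2 * (t : ℂ))) *
          ∏ t ∈ Ico (j + 1) (s + 1), (b + 2 * (t : ℂ))
          = (s.choose (j + 1) : ℂ) *
          (∏ t ∈ Ico (s - j) (s + 1), (a + 2 * (t : ℂ))) *
          (∏ t ∈ Ico (j + 1) (s + 1), (b + 2 * (t : ℂ))) := by
        intro j hj
        have e1 : s + 1 - (j + 1) = s - j := by omega
        rw [e1]
      have e0 : (s.choose 0 : ℂ) *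
          (∏ t ∈ Ico (s + 1 - 0) (s + 1), (a + 2 * (t : ℂ))) *
          ∏ t ∈ Ico 0 (s + 1), (b + 2 * (t : ℂ))
          = ∏ t ∈ range (s + 1), (b + 2 * (t : ℂ)) := by
        rw [Nat.choose_zero_right, Nat.sub_zero, Finset.Ico_self, Finset.prod_empty,
          Nat.Ico_zero_eq_range]
        push_cast
        ring
      have e3' := Finset.sum_congr rfl e3
      calc _ = ∑ j ∈ range (s + 1), (s.choose (j + 1) : ℂ) *
              (∏ t ∈ Ico (s + 1 - (j + 1)) (s + 1), (a + 2 * (t : ℂ))) *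
              (∏ t ∈ Ico (j + 1) (s + 1), (b + 2 * (t : ℂ)))
              + ((s.choose 0 : ℂ) *
              (∏ t ∈ Ico (s + 1 - 0) (s + 1), (a + 2 * (t : ℂ))) *
              ∏ t ∈ Ico 0 (s + 1), (b + 2 * (t : ℂ))) := by
            rw [e3', e0]
        _ = ∑ j ∈ range (s + 1 + 1), (s.choose j : ℂ) *
              (∏ t ∈ Ico (s + 1 - j) (s + 1), (a + 2 * (t : ℂ))) *
              ∏ t ∈ Ico j (s + 1), (b + 2 * (t : ℂ)) := g1.symm
        _ = _ := by rw [g2, hz, add_zero]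
    rw [add_assoc, hS1, ← Finset.sum_add_distrib]
    -- pointwise combination
    have hpoint : ∀ j ∈ range (s + 1),
        ((s.choose j : ℂ) *
          (∏ t ∈ Ico (s - j) (s + 1), (a + 2 * (t : ℂ))) *
          (∏ t ∈ Ico (j + 1) (s + 1), (b + 2 * (t : ℂ)))
        + (s.choose j : ℂ) *
          (∏ t ∈ Ico (s + 1 - j) (s + 1), (a + 2 * (t : ℂ))) *
          (∏ t ∈ Ico j (s + 1), (b + 2 * (t : ℂ))))
        = (a + b + 2 * (s : ℂ)) * ((s.choose j : ℂ) *
            (∏ t ∈ Ico (s - j) s, ((a + 2) + 2 * (t : ℂ))) *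
            ∏ t ∈ Ico j s, ((b + 2) + 2 * (t : ℂ))) := by
      intro j hj
      have hjs : j ≤ s := by
        have := Finset.mem_range.mp hj
        omega
      have hshiftA : (∏ t ∈ Ico (s - j) s, ((a + 2) + 2 * (t : ℂ)))
          = ∏ t ∈ Ico (s + 1 - j) (s + 1), (a + 2 * (t : ℂ)) := by
        have := Finset.prod_Ico_add' (fun x : ℕ => a + 2 * (x : ℂ)) (s - j) s 1
        rw [show s + 1 - j = s - j + 1 from by omega, ← this]
        refine Finset.prod_congr rfl fun t _ => ?_
        push_cast
        ring
      have hshiftB : (∏ t ∈ Ico j s, ((b + 2) + 2 * (t : ℂ)))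
          = ∏ t ∈ Ico (j + 1) (s + 1), (b + 2 * (t : ℂ)) := by
        have := Finset.prod_Ico_add' (fun x : ℕ => b + 2 * (x : ℂ)) j s 1
        rw [← this]
        refine Finset.prod_congr rfl fun t _ => ?_
        push_cast
        ring
      have hA : (∏ t ∈ Ico (s - j) (s + 1), (a + 2 * (t : ℂ)))
          = (a + 2 * ((s : ℂ) - (j : ℂ))) * ∏ t ∈ Ico (s + 1 - j) (s + 1), (a + 2 * (t : ℂ)) := by
        rw [Finset.prod_eq_prod_Ico_succ_bot (by omega : s - j < s + 1)]
        have e : s - j + 1 = s + 1 - j := by omega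
        rw [e]
        congr 1
        rw [Nat.cast_sub hjs]
      have hB : (∏ t ∈ Ico j (s + 1), (b + 2 * (t : ℂ)))
          = (b + 2 * (j : ℂ)) * ∏ t ∈ Ico (j + 1) (s + 1), (b + 2 * (t : ℂ)) := by
        rw [Finset.prod_eq_prod_Ico_succ_bot (by omega : j < s + 1)]
      rw [hshiftA, hshiftB, hA, hB]
      ring
    have hpoint' := Finset.sum_congr rfl hpoint
    rw [hpoint', ← Finset.mul_sum, ih (a + 2) (b + 2)]
    -- final product manipulation
    rw [Finset.prod_range_succ' (fun t => (a + b + 2 * ((s + 1 : ℕ) : ℂ) - 2 + 2 * (t : ℂ))) s]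
    have hf0 : (a + b + 2 * ((s + 1 : ℕ) : ℂ) - 2 + 2 * ((0 : ℕ) : ℂ)) = a + b + 2 * (s : ℂ) := by
      push_cast
      ring
    have hrest : ∀ t ∈ range s, (a + b + 2 * ((s + 1 : ℕ) : ℂ) - 2 + 2 * ((t + 1 : ℕ) : ℂ))
        = ((a + 2) + (b + 2) + 2 * (s : ℂ) - 2 + 2 * (t : ℂ)) := by
      intro t _
      push_cast
      ring
    have hrest' := Finset.prod_congr rfl hrest
    rw [hf0, hrest']
    ring

end Aux

theorem stmt10 (p q s k i : ℕ) (hp : 1 ≤ p) (hq : 1 ≤ q)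
    (Pk Qi : MvPolynomial (Fin (p + q)) ℂ)
    (hPk_supp : Pk ∈ MvPolynomial.supported ℂ {j : Fin (p + q) | (j : ℕ) < p})
    (hPk_harm : lap (p + q) Pk = 0) (hPk_hom : Pk.IsHomogeneous k)
    (hQi_supp : Qi ∈ MvPolynomial.supported ℂ {j : Fin (p + q) | p ≤ (j : ℕ)})
    (hQi_harm : lap (p + q) Qi = 0) (hQi_hom : Qi.IsHomogeneous i)
    (H : MvPolynomial (Fin (p + q)) ℂ) (hH_harm : lap (p + q) H = 0)
    (hH_diff : ∃ R, u2 p q ^ s * Pk * Qi - H = r2 (p + q) * R) :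
    fischer (p + q) H H
      = (2 : ℂ) ^ s * (Nat.factorial s : ℂ) *
          (∏ t ∈ range s,
            ((2 * (k : ℂ) + (p : ℂ) + 2 * (t : ℂ)) * (2 * (i : ℂ) + (q : ℂ) + 2 * (t : ℂ)) /
              (2 * (s : ℂ) + 2 * (k : ℂ) + 2 * (i : ℂ) + (p : ℂ) + (q : ℂ) - 2 + 2 * (t : ℂ)))) *
          fischer (p + q) Pk Pk * fischer (p + q) Qi Qi := by
  classical
  obtain ⟨R, hR⟩ := hH_diff
  have hlapV_Pk : lapV p q Pk = 0 := Aux.lapV_eq_zero_of_usupported hPk_supp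
  have hlapU_Qi : lapU p q Qi = 0 := Aux.lapU_eq_zero_of_vsupported hQi_supp
  have hlapU_Pk : lapU p q Pk = 0 := by
    have h : lapU p q Pk + lapV p q Pk = 0 := by
      rw [← Aux.lap_eq_lapU_add_lapV]; exact hPk_harm
    rwa [hlapV_Pk, add_zero] at h
  have hlapV_Qi : lapV p q Qi = 0 := by
    have h : lapU p q Qi + lapV p q Qi = 0 := by
      rw [← Aux.lap_eq_lapU_add_lapV]; exact hQi_harm
    rwa [hlapU_Qi, zero_add] at h
  set e : ℕ → ℕ → MvPolynomial (Fin (p + q)) ℂ :=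
    fun a b => (u2 p q ^ a * Pk) * (v2 p q ^ b * Qi) with he
  have hv_supp : ∀ b, v2 p q ^ b * Qi ∈
      MvPolynomial.supported ℂ {j : Fin (p + q) | p ≤ (j : ℕ)} :=
    fun b => Subalgebra.mul_mem _ (Subalgebra.pow_mem _ Aux.v2_mem_supported _) hQi_supp
  have hu_supp : ∀ a, u2 p q ^ a * Pk ∈
      MvPolynomial.supported ℂ {j : Fin (p + q) | (j : ℕ) < p} :=
    fun a => Subalgebra.mul_mem _ (Subalgebra.pow_mem _ Aux.u2_mem_supported _) hPk_supp
  have hvz : ∀ b (j : Fin (p + q)), (j : ℕ) < p → pderiv j (v2 p q ^ b * Qi) = 0 :=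
    fun b j hj => Aux.pderiv_eq_zero_of_supported (hv_supp b)
      (by simp only [Set.mem_setOf_eq]; omega)
  have huz : ∀ a (j : Fin (p + q)), p ≤ (j : ℕ) → pderiv j (u2 p q ^ a * Pk) = 0 :=
    fun a j hj => Aux.pderiv_eq_zero_of_supported (hu_supp a)
      (by simp only [Set.mem_setOf_eq]; omega)
  have hlapU_e0 : ∀ b, lapU p q (e 0 b) = 0 := by
    intro b
    simp only [he]
    rw [Aux.lapU_mul_right (hvz b), pow_zero, one_mul, hlapU_Pk, zero_mul]
  have hlapU_e : ∀ a b, lapU p q (e (a + 1) b) = Aux.muC k p a • e a b := by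
    intro a b
    simp only [he]
    rw [Aux.lapU_mul_right (hvz b), Aux.lapU_u2_pow hPk_supp hlapU_Pk hPk_hom a, smul_mul_assoc]
  have hlapV_e0 : ∀ a, lapV p q (e a 0) = 0 := by
    intro a
    simp only [he]
    rw [Aux.lapV_mul_left (huz a), pow_zero, one_mul, hlapV_Qi, mul_zero]
  have hlapV_e : ∀ a b, lapV p q (e a (b + 1)) = Aux.nuC i q b • e a b := by
    intro a b
    simp only [he]
    rw [Aux.lapV_mul_left (huz a), Aux.lapV_v2_pow hQi_supp hlapV_Qi hQi_hom b, mul_smul_comm]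
  have he_succ : ∀ c, e (c + 1) 0 = u2 p q * e c 0 := by
    intro c; simp only [he]; ring
  have hrec1 : ∀ c a b, fischer (p + q) (e (c + 1) 0) (e (a + 1) b)
      = Aux.muC k p a * fischer (p + q) (e c 0) (e a b) := by
    intro c a b
    rw [he_succ c, Aux.fischer_lapU, hlapU_e a b, Aux.fischer_smul_right]
  have hrec0 : ∀ c b, fischer (p + q) (e (c + 1) 0) (e 0 b) = 0 := by
    intro c b
    rw [he_succ c, Aux.fischer_lapU, hlapU_e0 b, Aux.fischer_zero_right]
  have hzero : ∀ a b, 1 ≤ b → fischer (p + q) (e (a + b) 0) (e a b) = 0 := by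
    intro a
    induction a with
    | zero =>
      intro b hb
      obtain ⟨b', rfl⟩ : ∃ b', b = b' + 1 := ⟨b - 1, by omega⟩
      rw [Nat.zero_add]
      exact hrec0 b' (b' + 1)
    | succ a ih =>
      intro b hb
      rw [show a + 1 + b = (a + b) + 1 from by omega, hrec1 (a + b) a b, ih b hb, mul_zero]
  have hdiag : ∀ c, fischer (p + q) (e c 0) (e c 0)
      = (∏ t ∈ range c, Aux.muC k p t) * fischer (p + q) (e 0 0) (e 0 0) := by
    intro c
    induction c with
    | zero => rw [Finset.prod_range_zero, one_mul]
    | succ c ih => rw [hrec1 c c 0, ih, Finset.prod_range_succ]; ring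
  have hbase : fischer (p + q) (e 0 0) (e 0 0)
      = fischer (p + q) Pk Pk * fischer (p + q) Qi Qi := by
    have he00 : e 0 0 = Pk * Qi := by
      simp only [he]; rw [pow_zero, one_mul, pow_zero, one_mul]
    rw [he00]
    exact Aux.fischer_mul_of_disjoint hPk_supp hQi_supp
  -- numerology
  set gam : ℕ → ℂ := fun j => (s.choose j : ℂ) *
      (∏ t ∈ Ico (s - j) s, (2 * (k : ℂ) + (p : ℂ) + 2 * (t : ℂ))) *
      ∏ t ∈ Ico j s, (2 * (i : ℂ) + (q : ℂ) + 2 * (t : ℂ)) with hgam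
  set GG : ℂ := ∏ t ∈ range s,
      (2 * (k : ℂ) + (p : ℂ) + (2 * (i : ℂ) + (q : ℂ)) + 2 * (s : ℂ) - 2 + 2 * (t : ℂ)) with hGG
  have hGsum : (∑ j ∈ range (s + 1), gam j) = GG := by
    simp only [hgam, hGG]
    exact Aux.keyF s (2 * (k : ℂ) + (p : ℂ)) (2 * (i : ℂ) + (q : ℂ))
  have hGne : GG ≠ 0 := by
    rw [hGG]
    apply Finset.prod_ne_zero_iff.mpr
    intro t ht
    have ht' : t < s := Finset.mem_range.mp ht
    have h1 : (2 * (k : ℂ) + (p : ℂ) + (2 * (i : ℂ) + (q : ℂ)) + 2 * (s : ℂ) - 2 + 2 * (t : ℂ))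
        = ((2 * k + p + 2 * i + q + 2 * s + 2 * t - 2 : ℕ) : ℂ) := by
      rw [Nat.cast_sub (by omega)]
      push_cast
      ring
    rw [h1]
    exact_mod_cast (by omega : 2 * k + p + 2 * i + q + 2 * s + 2 * t - 2 ≠ 0)
  set c : ℕ → ℂ := fun j => (-1 : ℂ) ^ j * gam j / GG with hc
  have hgam_rec : ∀ j, j < s →
      gam (j + 1) * Aux.nuC i q j = gam j * Aux.muC k p (s - 1 - j) := by
    intro j hj
    have hBsplit : (∏ t ∈ Ico j s, (2 * (i : ℂ) + (q : ℂ) + 2 * (t : ℂ)))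
        = (2 * (i : ℂ) + (q : ℂ) + 2 * (j : ℂ)) *
          ∏ t ∈ Ico (j + 1) s, (2 * (i : ℂ) + (q : ℂ) + 2 * (t : ℂ)) :=
      Finset.prod_eq_prod_Ico_succ_bot hj _
    have hAsplit : (∏ t ∈ Ico (s - (j + 1)) s, (2 * (k : ℂ) + (p : ℂ) + 2 * (t : ℂ)))
        = (2 * (k : ℂ) + (p : ℂ) + 2 * ((s : ℂ) - (j : ℂ) - 1)) *
          ∏ t ∈ Ico (s - j) s, (2 * (k : ℂ) + (p : ℂ) + 2 * (t : ℂ)) := by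
      rw [Finset.prod_eq_prod_Ico_succ_bot (show s - (j + 1) < s from by omega)]
      rw [show s - (j + 1) + 1 = s - j from by omega]
      congr 2
      rw [Nat.cast_sub (by omega : j + 1 ≤ s)]
      push_cast
      ring
    have hchoose : ((s.choose (j + 1) : ℂ)) * ((j : ℂ) + 1)
        = (s.choose j : ℂ) * ((s : ℂ) - (j : ℂ)) := by
      have h := Nat.choose_succ_right_eq s j
      have h2 : ((s.choose (j + 1) * (j + 1) : ℕ) : ℂ) = ((s.choose j * (s - j) : ℕ) : ℂ) := by
        rw [h]
      push_cast [Nat.cast_sub hj.le] at h2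
      linear_combination h2
    have hcast2 : ((s - 1 - j : ℕ) : ℂ) = (s : ℂ) - (j : ℂ) - 1 := by
      rw [show s - 1 - j = s - (j + 1) from by omega, Nat.cast_sub (by omega : j + 1 ≤ s)]
      push_cast
      ring
    simp only [hgam, Aux.nuC, Aux.muC]
    rw [hBsplit, hAsplit, hcast2]
    linear_combination (2 * (∏ t ∈ Ico (s - j) s, (2 * (k : ℂ) + (p : ℂ) + 2 * (t : ℂ))) *
      (∏ t ∈ Ico (j + 1) s, (2 * (i : ℂ) + (q : ℂ) + 2 * (t : ℂ))) *
      (2 * (k : ℂ) + (p : ℂ) + 2 * ((s : ℂ) - (j : ℂ) - 1)) *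
      (2 * (i : ℂ) + (q : ℂ) + 2 * (j : ℂ))) * hchoose
  have hc_rec : ∀ j, j < s →
      c j * Aux.muC k p (s - 1 - j) + c (j + 1) * Aux.nuC i q j = 0 := by
    intro j hj
    simp only [hc]
    have hstep : (-1 : ℂ) ^ j * gam j / GG * Aux.muC k p (s - 1 - j)
        + (-1 : ℂ) ^ (j + 1) * gam (j + 1) / GG * Aux.nuC i q j
        = ((-1 : ℂ) ^ j * (gam j * Aux.muC k p (s - 1 - j)
            - gam (j + 1) * Aux.nuC i q j)) / GG := by
      rw [pow_succ]
      ring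
    rw [hstep, ← hgam_rec j hj, sub_self, mul_zero, zero_div]
  have hnorm : ∑ t ∈ range (s + 1), (-1 : ℂ) ^ t * c t = 1 := by
    have hpt : ∀ t, (-1 : ℂ) ^ t * c t = gam t / GG := by
      intro t
      simp only [hc]
      rw [← mul_div_assoc, ← mul_assoc, ← mul_pow]
      norm_num
    calc ∑ t ∈ range (s + 1), (-1 : ℂ) ^ t * c t
        = ∑ t ∈ range (s + 1), gam t / GG := Finset.sum_congr rfl fun t _ => hpt t
      _ = (∑ t ∈ range (s + 1), gam t) / GG := by rw [Finset.sum_div]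
      _ = 1 := by rw [hGsum]; exact div_self hGne
  set d : ℕ → ℂ := fun j => (-1 : ℂ) ^ j *
      (1 - ∑ t ∈ range (j + 1), (-1 : ℂ) ^ t * c t) with hd
  set H0 : MvPolynomial (Fin (p + q)) ℂ := ∑ j ∈ range (s + 1), c j • e (s - j) j with hH0
  set R0 : MvPolynomial (Fin (p + q)) ℂ := ∑ j ∈ range s, d j • e (s - 1 - j) j with hR0
  have hr2e : ∀ a b, r2 (p + q) * e a b = e (a + 1) b + e a (b + 1) := by
    intro a b
    rw [Aux.r2_eq_u2_add_v2]
    simp only [he]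
    ring
  -- Claim 1
  have hS2eq : ∑ j ∈ range (s + 1), (if j < s then d j else 0) • e (s - j) j
      = ∑ j ∈ range s, d j • e (s - j) j := by
    rw [Finset.sum_range_succ, if_neg (lt_irrefl s), zero_smul, add_zero]
    exact Finset.sum_congr rfl fun j hj => by rw [if_pos (Finset.mem_range.mp hj)]
  have hS3eq : ∑ j ∈ range (s + 1), (if j = 0 then 0 else d (j - 1)) • e (s - j) j
      = ∑ j ∈ range s, d j • e (s - (j + 1)) (j + 1) := by
    rw [Finset.sum_range_succ'
      (fun j => (if j = 0 then (0 : ℂ) else d (j - 1)) • e (s - j) j) s]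
    rw [if_pos rfl, zero_smul, add_zero]
    exact Finset.sum_congr rfl fun j hj => by
      rw [if_neg (Nat.succ_ne_zero j), Nat.add_sub_cancel]
  have hr2R0 : r2 (p + q) * R0
      = ∑ j ∈ range s, d j • e (s - j) j + ∑ j ∈ range s, d j • e (s - (j + 1)) (j + 1) := by
    rw [hR0, Finset.mul_sum]
    have hterm : ∀ j ∈ range s, r2 (p + q) * (d j • e (s - 1 - j) j)
        = d j • e (s - j) j + d j • e (s - (j + 1)) (j + 1) := by
      intro j hj
      have hjs : j < s := Finset.mem_range.mp hj
      rw [mul_smul_comm, hr2e, smul_add, show s - 1 - j + 1 = s - j from by omega,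
        show s - 1 - j = s - (j + 1) from by omega]
    have h10 := Finset.sum_congr rfl hterm
    rw [h10, Finset.sum_add_distrib]
  have hclaim1 : H0 + r2 (p + q) * R0
      = ∑ j ∈ range (s + 1), (c j + (if j < s then d j else 0)
          + (if j = 0 then 0 else d (j - 1))) • e (s - j) j := by
    have hsplit3 : ∀ j ∈ range (s + 1), (c j + (if j < s then d j else 0)
          + (if j = 0 then 0 else d (j - 1))) • e (s - j) j
        = c j • e (s - j) j + (if j < s then d j else 0) • e (s - j) j
          + (if j = 0 then 0 else d (j - 1)) • e (s - j) j := by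
      intro j hj; rw [add_smul, add_smul]
    have h11 := Finset.sum_congr rfl hsplit3
    rw [h11, Finset.sum_add_distrib, Finset.sum_add_distrib, hS2eq, hS3eq, hr2R0, hH0]
    ring
  -- Claim 2
  have hcoef : ∀ j ∈ range (s + 1), (c j + (if j < s then d j else 0)
      + (if j = 0 then 0 else d (j - 1))) = if j = 0 then (1 : ℂ) else 0 := by
    intro j hj
    have hjs : j ≤ s := by have := Finset.mem_range.mp hj; omega
    by_cases hj0 : j = 0
    · subst hj0
      rw [if_pos rfl, if_pos rfl, add_zero]
      by_cases hs0 : 0 < s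
      · rw [if_pos hs0]
        simp only [hd]
        rw [Finset.sum_range_one]
        ring
      · have hs : s = 0 := by omega
        have h9 := hnorm
        rw [hs] at h9
        rw [Finset.sum_range_one] at h9
        rw [if_neg hs0, add_zero]
        linear_combination h9
    · obtain ⟨j', rfl⟩ : ∃ j', j = j' + 1 := ⟨j - 1, by omega⟩
      rw [if_neg (Nat.succ_ne_zero j'), if_neg (Nat.succ_ne_zero j'), Nat.add_sub_cancel]
      have hz : ((-1 : ℂ) ^ j') ^ 2 = 1 := by
        rw [← pow_mul, mul_comm, pow_mul]
        norm_num
      by_cases hjlt : j' + 1 < s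
      · rw [if_pos hjlt]
        simp only [hd]
        rw [Finset.sum_range_succ ((fun t => (-1 : ℂ) ^ t * c t)) (j' + 1)]
        linear_combination (-(c (j' + 1))) * hz
      · have hjs' : j' + 1 = s := by omega
        rw [if_neg hjlt]
        have h1 := hnorm
        rw [← hjs'] at h1
        rw [Finset.sum_range_succ ((fun t => (-1 : ℂ) ^ t * c t)) (j' + 1)] at h1
        simp only [hd]
        linear_combination (-((-1 : ℂ) ^ j')) * h1 + (-(c (j' + 1))) * hz
  have hsum_e : H0 + r2 (p + q) * R0 = e s 0 := by
    have hcongr := Finset.sum_congr rfl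
      (fun j hj => by rw [hcoef j hj] :
        ∀ j ∈ range (s + 1), (c j + (if j < s then d j else 0)
          + (if j = 0 then 0 else d (j - 1))) • e (s - j) j
          = (if j = 0 then (1 : ℂ) else 0) • e (s - j) j)
    have h8 : (∑ j ∈ range (s + 1), (if j = 0 then (1 : ℂ) else 0) • e (s - j) j)
        = (if (0 : ℕ) = 0 then (1 : ℂ) else 0) • e (s - 0) 0 :=
      Finset.sum_eq_single_of_mem 0 (Finset.mem_range.mpr (by omega))
        (fun b hb hne => by rw [if_neg hne, zero_smul])
    rw [hclaim1, hcongr, h8, if_pos rfl, one_smul, Nat.sub_zero]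
  have hsplit : e s 0 - H0 = r2 (p + q) * R0 := by linear_combination - hsum_e
  -- lap H0 = 0
  have hlapH0 : lap (p + q) H0 = 0 := by
    rw [hH0, Aux.lap_sum]
    have hterm : ∀ j ∈ range (s + 1), lap (p + q) (c j • e (s - j) j)
        = c j • lapU p q (e (s - j) j) + c j • lapV p q (e (s - j) j) := by
      intro j hj
      rw [Aux.lap_smul, Aux.lap_eq_lapU_add_lapV, smul_add]
    have h12 := Finset.sum_congr rfl hterm
    rw [h12, Finset.sum_add_distrib]
    have hSU : ∑ j ∈ range (s + 1), c j • lapU p q (e (s - j) j)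
        = ∑ j ∈ range s, (c j * Aux.muC k p (s - 1 - j)) • e (s - 1 - j) j := by
      rw [Finset.sum_range_succ, Nat.sub_self, hlapU_e0 s, smul_zero, add_zero]
      refine Finset.sum_congr rfl fun j hj => ?_
      have hjs : j < s := Finset.mem_range.mp hj
      rw [show s - j = (s - 1 - j) + 1 from by omega, hlapU_e (s - 1 - j) j, smul_smul]
    have hSV : ∑ j ∈ range (s + 1), c j • lapV p q (e (s - j) j)
        = ∑ j ∈ range s, (c (j + 1) * Aux.nuC i q j) • e (s - 1 - j) j := by
      rw [Finset.sum_range_succ' (fun j => c j • lapV p q (e (s - j) j)) s]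
      rw [Nat.sub_zero, hlapV_e0 s, smul_zero, add_zero]
      refine Finset.sum_congr rfl fun j hj => ?_
      have hjs : j < s := Finset.mem_range.mp hj
      rw [show s - (j + 1) = s - 1 - j from by omega, hlapV_e (s - 1 - j) j, smul_smul]
    rw [hSU, hSV, ← Finset.sum_add_distrib]
    refine Finset.sum_eq_zero fun j hj => ?_
    have hjs : j < s := Finset.mem_range.mp hj
    rw [← add_smul, hc_rec j hjs, zero_smul]
  -- uniqueness
  have he00s : e s 0 = u2 p q ^ s * Pk * Qi := by
    simp only [he]
    rw [pow_zero, one_mul]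
  have hHeq : H = H0 := by
    have h2 : e s 0 - H = r2 (p + q) * R := by rw [he00s]; exact hR
    have hW : H - H0 = r2 (p + q) * (R0 - R) := by linear_combination hsplit - h2
    have hWlap : lap (p + q) (H - H0) = 0 := by
      rw [Aux.lap_sub, hH_harm, hlapH0, sub_zero]
    have hfz : fischer (p + q) (H - H0) (H - H0) = 0 := by
      have h3 : fischer (p + q) (H - H0) (H - H0)
          = fischer (p + q) (r2 (p + q) * (R0 - R)) (H - H0) :=
        congrArg (fun Z => fischer (p + q) Z (H - H0)) hW
      rw [h3, Aux.fischer_lap, hWlap, Aux.fischer_zero_right]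
    have h4 := Aux.fischer_self_eq_zero hfz
    exact sub_eq_zero.mp h4
  -- computation of the norm of H0
  have hH0H0 : fischer (p + q) H0 H0
      = c 0 * ((∏ t ∈ range s, Aux.muC k p t) *
          (fischer (p + q) Pk Pk * fischer (p + q) Qi Qi)) := by
    have hH0e : H0 = e s 0 - r2 (p + q) * R0 := by linear_combination - hsplit
    have h4 : fischer (p + q) H0 H0 = fischer (p + q) (e s 0 - r2 (p + q) * R0) H0 :=
      congrArg (fun Z => fischer (p + q) Z H0) hH0e
    rw [h4, Aux.fischer_sub_left, Aux.fischer_lap, hlapH0, Aux.fischer_zero_right, sub_zero]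
    rw [hH0, Aux.fischer_sum_right]
    have hterm : ∀ j ∈ range (s + 1), fischer (p + q) (e s 0) (c j • e (s - j) j)
        = c j * fischer (p + q) (e s 0) (e (s - j) j) :=
      fun j hj => Aux.fischer_smul_right _ _ _
    have h13 := Finset.sum_congr rfl hterm
    rw [h13]
    have h7 : (∑ j ∈ range (s + 1), c j * fischer (p + q) (e s 0) (e (s - j) j))
        = c 0 * fischer (p + q) (e s 0) (e (s - 0) 0) := by
      refine Finset.sum_eq_single_of_mem 0 (Finset.mem_range.mpr (by omega)) ?_
      intro j hj hne
      have hjs : j ≤ s := by have := Finset.mem_range.mp hj; omega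
      have h5 : fischer (p + q) (e s 0) (e (s - j) j) = 0 := by
        have h6 := hzero (s - j) j (by omega)
        rw [show s - j + j = s from by omega] at h6
        exact h6
      rw [h5, mul_zero]
    rw [h7, Nat.sub_zero, hdiag s, hbase]
  -- final arithmetic
  rw [hHeq, hH0H0]
  have hc0 : c 0 = (∏ t ∈ range s, (2 * (i : ℂ) + (q : ℂ) + 2 * (t : ℂ))) / GG := by
    simp only [hc, hgam]
    rw [pow_zero, Nat.choose_zero_right, Nat.sub_zero, Finset.Ico_self, Finset.prod_empty,
      Nat.Ico_zero_eq_range, Nat.cast_one]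
    ring
  have hmuprod : (∏ t ∈ range s, Aux.muC k p t)
      = (2 : ℂ) ^ s * (Nat.factorial s : ℂ) *
        ∏ t ∈ range s, (2 * (k : ℂ) + (p : ℂ) + 2 * (t : ℂ)) := by
    have h6 : ∀ t ∈ range s, Aux.muC k p t
        = 2 * ((t : ℂ) + 1) * (2 * (k : ℂ) + (p : ℂ) + 2 * (t : ℂ)) := fun t _ => rfl
    have h14 := Finset.prod_congr rfl h6
    rw [h14, Finset.prod_mul_distrib, Finset.prod_mul_distrib, Finset.prod_const,
      Finset.card_range]
    have hfact : ∏ t ∈ range s, ((t : ℂ) + 1) = (Nat.factorial s : ℂ) := by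
      rw [← Finset.prod_range_add_one_eq_factorial s, Nat.cast_prod]
      exact Finset.prod_congr rfl fun t _ => by push_cast; ring
    rw [hfact]
  have hGG2 : GG = ∏ t ∈ range s,
      (2 * (s : ℂ) + 2 * (k : ℂ) + 2 * (i : ℂ) + (p : ℂ) + (q : ℂ) - 2 + 2 * (t : ℂ)) := by
    rw [hGG]
    exact Finset.prod_congr rfl fun t _ => by ring
  have hrhs : (∏ t ∈ range s,
        ((2 * (k : ℂ) + (p : ℂ) + 2 * (t : ℂ)) * (2 * (i : ℂ) + (q : ℂ) + 2 * (t : ℂ)) /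
          (2 * (s : ℂ) + 2 * (k : ℂ) + 2 * (i : ℂ) + (p : ℂ) + (q : ℂ) - 2 + 2 * (t : ℂ))))
      = (∏ t ∈ range s, (2 * (k : ℂ) + (p : ℂ) + 2 * (t : ℂ))) *
        (∏ t ∈ range s, (2 * (i : ℂ) + (q : ℂ) + 2 * (t : ℂ))) /
        ∏ t ∈ range s,
          (2 * (s : ℂ) + 2 * (k : ℂ) + 2 * (i : ℂ) + (p : ℂ) + (q : ℂ) - 2 + 2 * (t : ℂ)) := by
    rw [Finset.prod_div_distrib, Finset.prod_mul_distrib]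
  rw [hc0, hmuprod, hGG2, hrhs]
  ring

end
end

section
/- Let P be a harmonic polynomial in m variables, homogeneous of degree k, and let j ≤ s be natural numbers. Then Δ^j(r^{2s}·P) = (∏_{t=0}^{j-1} 2(s-t)·(2(s-t) + 2k + m - 2)) · r^{2(s-j)}·P. -/
open MvPolynomial Finset

noncomputable section

/-- The Euler operator `E P = ∑ X_i ∂_i P`. -/
def eulerOp (m : ℕ) (P : MvPolynomial (Fin m) ℂ) : MvPolynomial (Fin m) ℂ :=
  ∑ i, X i * pderiv i P

lemma euler_monomial (m : ℕ) (i : Fin m) (d : Fin m →₀ ℕ) (c : ℂ) :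
    X i * pderiv i (monomial d c) = monomial d ((d i : ℂ) * c) := by
  rw [pderiv_monomial]
  rcases Nat.eq_zero_or_pos (d i) with h | h
  · simp [h]
  · rw [X, monomial_mul, one_mul, mul_comm c]
    congr 2
    rw [add_comm]
    exact tsub_add_cancel_of_le (Finsupp.single_le_iff.mpr h)

lemma euler (m k : ℕ) (P : MvPolynomial (Fin m) ℂ) (hhom : P.IsHomogeneous k) :
    ∑ i, X i * pderiv i P = (k : ℂ) • P := by
  conv_lhs => rw [← P.support_sum_monomial_coeff]
  conv_rhs => rw [← P.support_sum_monomial_coeff]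
  simp only [map_sum, Finset.mul_sum, euler_monomial, Finset.smul_sum]
  rw [Finset.sum_comm]
  refine Finset.sum_congr rfl fun d hd => ?_
  have h1 : ∑ x : Fin m, d x = k := by
    have := hhom (mem_support_iff.mp hd)
    rw [Pi.one_def, ← Finsupp.degree_eq_weight_one] at this
    rw [← this, Finsupp.degree]
    exact (Finset.sum_subset (Finset.subset_univ _)
      (fun x _ hx => Finsupp.notMem_support_iff.mp hx)).symm
  rw [← h1]
  push_cast
  simp [Finset.sum_smul, smul_monomial]

end

noncomputable section

lemma pderiv_r2 (m : ℕ) (i : Fin m) : pderiv i (r2 m) = 2 * X i := by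
  simp [r2, pderiv_pow, pderiv_X, Pi.single_apply, mul_ite, Finset.sum_ite_eq]

lemma lap_mul (m : ℕ) (f g : MvPolynomial (Fin m) ℂ) :
    lap m (f * g)
      = lap m f * g + 2 * ∑ i, pderiv i f * pderiv i g + f * lap m g := by
  simp only [lap, pderiv_mul, map_add, Finset.sum_add_distrib, Finset.mul_sum,
    Finset.sum_mul, two_mul, add_mul, mul_add]
  abel

lemma hlap_r2pow (m n : ℕ) :
    lap m (r2 m ^ (n+1)) = C (((n:ℂ)+1) * (4*(n:ℂ) + 2*(m:ℂ))) * r2 m ^ n := by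
  have hp2 : ∀ x : Fin m, pderiv x (2 : MvPolynomial (Fin m) ℂ) = 0 := fun x => by
    rw [← map_ofNat (C : ℂ →+* MvPolynomial (Fin m) ℂ) 2, pderiv_C]
  simp only [lap, pderiv_pow, pderiv_r2, Nat.add_sub_cancel, ← map_natCast (C (σ := Fin m)),
    pderiv_mul, pderiv_C_mul, pderiv_X, Pi.single_eq_same, mul_one, pderiv_C, hp2,
    zero_mul, add_zero, zero_add, mul_zero]
  have h1 : ∀ x : Fin m, C ((n:ℂ)+1) * (C (n:ℂ) * r2 m ^ (n-1) * (2 * X x)) * (2 * X x)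
      = (C ((n:ℂ)+1) * C (n:ℂ) * 4 * r2 m ^ (n-1)) * X x ^ 2 := fun x => by ring
  have hr : ∑ i : Fin m, X i ^ 2 = r2 m := rfl
  push_cast
  simp only [h1, Finset.sum_add_distrib, ← Finset.mul_sum, hr, Finset.sum_const,
    Finset.card_univ, Fintype.card_fin, nsmul_eq_mul]
  have h2 : C ((n:ℂ)+1) * C (n:ℂ) * 4 * r2 m ^ (n-1) * r2 m
      = C ((n:ℂ)+1) * C (n:ℂ) * 4 * r2 m ^ n := by
    cases n with
    | zero => simp
    | succ p => rw [Nat.add_sub_cancel, mul_assoc, ← pow_succ]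
  rw [h2]
  simp only [map_mul, map_add, map_ofNat, map_one, map_natCast]
  ring


lemma cross (m k n : ℕ) (P : MvPolynomial (Fin m) ℂ) (hhom : P.IsHomogeneous k) :
    ∑ i, pderiv i (r2 m ^ (n+1)) * pderiv i P
      = C ((((n:ℂ))+1) * 2 * (k:ℂ)) * (r2 m ^ n * P) := by
  simp only [pderiv_pow, pderiv_r2, Nat.add_sub_cancel, ← map_natCast (C (σ := Fin m))]
  calc ∑ i, (C ((n+1:ℕ):ℂ) * r2 m ^ n * (2 * X i)) * pderiv i P
      = (C ((n+1:ℕ):ℂ) * r2 m ^ n * 2) * ∑ i, X i * pderiv i P := by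
        rw [Finset.mul_sum]; exact Finset.sum_congr rfl fun i _ => by ring
    _ = _ := by
        rw [euler m k P hhom, smul_eq_C_mul]
        simp only [map_mul, map_add, map_one, map_natCast, map_ofNat]
        push_cast
        ring

lemma step (m k n : ℕ) (P : MvPolynomial (Fin m) ℂ)
    (hharm : lap m P = 0) (hhom : P.IsHomogeneous k) :
    lap m (r2 m ^ (n+1) * P)
      = C (2 * ((n:ℂ)+1) * (2 * ((n:ℂ)+1) + 2*(k:ℂ) + (m:ℂ) - 2)) * (r2 m ^ n * P) := by
  rw [lap_mul, hharm, mul_zero, add_zero, hlap_r2pow, cross m k n P hhom]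
  simp only [map_mul, map_add, map_sub, map_ofNat, map_one, map_natCast]
  push_cast
  ring

lemma lap_smul (m : ℕ) (c : ℂ) (Q : MvPolynomial (Fin m) ℂ) :
    lap m (c • Q) = c • lap m Q := by
  simp [lap, Finset.smul_sum]


theorem stmt11 (m k s j : ℕ) (hj : j ≤ s) (P : MvPolynomial (Fin m) ℂ)
    (hharm : lap m P = 0) (hhom : P.IsHomogeneous k) :
    (lap m)^[j] (r2 m ^ s * P)
      = (∏ t ∈ range j,
          (2 * ((s : ℂ) - (t : ℂ)) * (2 * ((s : ℂ) - (t : ℂ)) + 2 * (k : ℂ) + (m : ℂ) - 2)))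
          • (r2 m ^ (s - j) * P) := by
  induction j with
  | zero => simp
  | succ j ih =>
    have hj' : j ≤ s := Nat.le_of_succ_le hj
    rw [Function.iterate_succ_apply', ih hj', lap_smul]
    have hsj : s - j = (s - (j+1)) + 1 := by omega
    rw [hsj, step m k (s - (j+1)) P hharm hhom, prod_range_succ, smul_eq_C_mul,
      smul_eq_C_mul, map_mul]
    have hc : ((s - (j+1) : ℕ) : ℂ) + 1 = (s:ℂ) - (j:ℂ) := by
      rw [Nat.cast_sub hj]; push_cast; ring
    rw [hc]
    simp only [map_mul]
    ring

end
end

section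
/- (Laplace–Beltrami eigenvalues of the branched basis elements.) Let m = p + q with p, q ≥ 1, let s, k, i ∈ ℕ with 2s + k + i = n, let P_k be a harmonic polynomial in the u-variables homogeneous of degree k and Q_i a harmonic polynomial in the v-variables homogeneous of degree i, and let H be a harmonic polynomial in m variables with |u|^{2s}·P_k·Q_i - H ∈ r²·Pol. Then |u|²·Δ_u H - E_u(E_u H) - (p-2)·E_u H = -k(k+p-2)·H, |v|²·Δ_v H - E_v(E_v H) - (q-2)·E_v H = -i(i+q-2)·H, and r²·ΔH - E(E H) - (m-2)·E H = -n(n+m-2)·H. -/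
open MvPolynomial Finset

noncomputable section

/-- The Euler operator in the `u`-variables. -/
def eulerU (p q : ℕ) (F : MvPolynomial (Fin (p + q)) ℂ) : MvPolynomial (Fin (p + q)) ℂ :=
  ∑ i ∈ univ.filter (fun i : Fin (p + q) => (i : ℕ) < p), X i * pderiv i F

/-- The Euler operator in the `v`-variables. -/
def eulerV (p q : ℕ) (F : MvPolynomial (Fin (p + q)) ℂ) : MvPolynomial (Fin (p + q)) ℂ :=
  ∑ i ∈ univ.filter (fun i : Fin (p + q) => p ≤ (i : ℕ)), X i * pderiv i F

namespace LBAux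

set_option linter.unusedSectionVars false

variable {σ : Type*} [Fintype σ] [DecidableEq σ]

lemma pderiv_RR_aux (T : Finset σ) (j : σ) :
    pderiv j (∑ i ∈ T, (X i ^ 2 : MvPolynomial σ ℂ)) = if j ∈ T then 2 * X j else 0 := by
  rw [map_sum]
  have : ∀ i ∈ T, pderiv j (X i ^ 2 : MvPolynomial σ ℂ)
      = if i = j then 2 * X j else 0 := by
    intro i _
    rcases eq_or_ne i j with rfl | h
    · rw [if_pos rfl, pderiv_pow, pderiv_X_self]; ring
    · rw [if_neg h, pderiv_pow, pderiv_X_of_ne h, mul_zero]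
  rw [Finset.sum_congr rfl this, Finset.sum_ite_eq' T j (fun _ => 2 * X j)]

lemma pderiv_pderiv (i j : σ) (f : MvPolynomial σ ℂ) :
    pderiv i (pderiv j f) = pderiv j (pderiv i f) := by
  induction f using MvPolynomial.induction_on' with
  | monomial s a =>
      rcases eq_or_ne i j with rfl | hij
      · rfl
      · simp only [pderiv_monomial]
        rw [tsub_tsub, tsub_tsub, add_comm (Finsupp.single j 1)]
        congr 1
        · rw [Finsupp.tsub_apply, Finsupp.tsub_apply,
            Finsupp.single_eq_of_ne' hij, Finsupp.single_eq_of_ne' (Ne.symm hij)]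
          simp only [Nat.sub_zero]
          ring
  | add f g hf hg => simp [hf, hg]


/-- partial Laplacian over T -/
def DD (T : Finset σ) (f : MvPolynomial σ ℂ) : MvPolynomial σ ℂ :=
  ∑ i ∈ T, pderiv i (pderiv i f)

/-- partial Euler operator over T -/
def EE (T : Finset σ) (f : MvPolynomial σ ℂ) : MvPolynomial σ ℂ :=
  ∑ i ∈ T, X i * pderiv i f

/-- partial radius squared over T -/
def RR (T : Finset σ) : MvPolynomial σ ℂ := ∑ i ∈ T, X i ^ 2

lemma pderiv_RR (T : Finset σ) (j : σ) :
    pderiv j (RR T) = if j ∈ T then 2 * X j else 0 := pderiv_RR_aux T j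

lemma DD_add (T : Finset σ) (f g : MvPolynomial σ ℂ) :
    DD T (f + g) = DD T f + DD T g := by
  simp [DD, Finset.sum_add_distrib]

lemma DD_sub (T : Finset σ) (f g : MvPolynomial σ ℂ) :
    DD T (f - g) = DD T f - DD T g := by
  simp [DD, Finset.sum_sub_distrib]

lemma DD_smul (T : Finset σ) (c : ℂ) (f : MvPolynomial σ ℂ) :
    DD T (c • f) = c • DD T f := by
  simp [DD, Finset.smul_sum]

lemma EE_add (T : Finset σ) (f g : MvPolynomial σ ℂ) :
    EE T (f + g) = EE T f + EE T g := by
  simp [EE, mul_add, Finset.sum_add_distrib]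

lemma EE_sub (T : Finset σ) (f g : MvPolynomial σ ℂ) :
    EE T (f - g) = EE T f - EE T g := by
  simp [EE, mul_sub, Finset.sum_sub_distrib]

lemma EE_smul (T : Finset σ) (c : ℂ) (f : MvPolynomial σ ℂ) :
    EE T (c • f) = c • EE T f := by
  simp [EE, Finset.smul_sum, mul_smul_comm]

lemma DD_zero (T : Finset σ) : DD T (0 : MvPolynomial σ ℂ) = 0 := by simp [DD]
lemma EE_zero (T : Finset σ) : EE T (0 : MvPolynomial σ ℂ) = 0 := by simp [EE]

lemma DD_sum {α : Type*} (T : Finset σ) (s : Finset α) (g : α → MvPolynomial σ ℂ) :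
    DD T (∑ x ∈ s, g x) = ∑ x ∈ s, DD T (g x) := by
  classical
  induction s using Finset.induction with
  | empty => simp [DD_zero]
  | insert _ _ hx ih => rw [Finset.sum_insert hx, Finset.sum_insert hx, DD_add, ih]

lemma EE_sum {α : Type*} (T : Finset σ) (s : Finset α) (g : α → MvPolynomial σ ℂ) :
    EE T (∑ x ∈ s, g x) = ∑ x ∈ s, EE T (g x) := by
  classical
  induction s using Finset.induction with
  | empty => simp [EE_zero]
  | insert _ _ hx ih => rw [Finset.sum_insert hx, Finset.sum_insert hx, EE_add, ih]

lemma EE_mul (T : Finset σ) (f g : MvPolynomial σ ℂ) :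
    EE T (f * g) = f * EE T g + g * EE T f := by
  simp only [EE, Finset.mul_sum]
  rw [← Finset.sum_add_distrib]
  exact Finset.sum_congr rfl fun i _ => by rw [pderiv_mul]; ring

lemma DD_mul (T : Finset σ) (f g : MvPolynomial σ ℂ) :
    DD T (f * g) = f * DD T g + g * DD T f + 2 * ∑ i ∈ T, pderiv i f * pderiv i g := by
  simp only [DD, Finset.mul_sum]
  rw [← Finset.sum_add_distrib, ← Finset.sum_add_distrib]
  exact Finset.sum_congr rfl fun i _ => by
    simp only [pderiv_mul, map_add]; ring

lemma pderiv_EE (T : Finset σ) (j : σ) (f : MvPolynomial σ ℂ) :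
    pderiv j (EE T f) = EE T (pderiv j f) + (if j ∈ T then pderiv j f else 0) := by
  rw [EE, map_sum]
  have h : ∀ i ∈ T, pderiv j (X i * pderiv i f)
      = X i * pderiv i (pderiv j f) + (if i = j then pderiv j f else 0) := by
    intro i _
    rw [pderiv_mul]
    rcases eq_or_ne i j with rfl | h
    · rw [pderiv_X_self, if_pos rfl, one_mul, add_comm]
    · rw [pderiv_X_of_ne h, if_neg h, zero_mul, zero_add, add_zero,
        pderiv_pderiv i j f]
  rw [Finset.sum_congr rfl h, Finset.sum_add_distrib,
    Finset.sum_ite_eq' T j (fun _ => pderiv j f)]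
  rfl

lemma DD_EE (T : Finset σ) (f : MvPolynomial σ ℂ) :
    DD T (EE T f) = EE T (DD T f) + 2 * DD T f := by
  have h : ∀ i ∈ T, pderiv i (pderiv i (EE T f))
      = EE T (pderiv i (pderiv i f)) + 2 * pderiv i (pderiv i f) := by
    intro i hi
    rw [pderiv_EE, if_pos hi, map_add, pderiv_EE, if_pos hi]
    ring
  rw [DD, Finset.sum_congr rfl h, Finset.sum_add_distrib, ← EE_sum, ← Finset.mul_sum]
  rfl


lemma DD_C_mul (T : Finset σ) (a : ℂ) (f : MvPolynomial σ ℂ) :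
    DD T (C a * f) = C a * DD T f := by
  rw [← smul_eq_C_mul, ← smul_eq_C_mul, DD_smul]

lemma EE_C_mul (T : Finset σ) (a : ℂ) (f : MvPolynomial σ ℂ) :
    EE T (C a * f) = C a * EE T f := by
  rw [← smul_eq_C_mul, ← smul_eq_C_mul, EE_smul]

lemma two_eq_C : (2 : MvPolynomial σ ℂ) = C 2 := (map_ofNat C 2).symm

lemma EE_two_mul (T : Finset σ) (f : MvPolynomial σ ℂ) :
    EE T (2 * f) = 2 * EE T f := by
  rw [two_eq_C, EE_C_mul]

lemma DD_RR (T : Finset σ) : DD T (RR T) = 2 * (T.card : MvPolynomial σ ℂ) := by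
  have h : ∀ i ∈ T, pderiv i (pderiv i (RR T)) = C (2 : ℂ) := by
    intro i hi
    rw [pderiv_RR, if_pos hi, two_eq_C, pderiv_C_mul, pderiv_X_self, mul_one]
  rw [DD, Finset.sum_congr rfl h, Finset.sum_const, nsmul_eq_mul, ← two_eq_C]
  ring

lemma EE_RR (T : Finset σ) : EE T (RR T) = 2 * RR T := by
  have h : ∀ i ∈ T, X i * pderiv i (RR T) = 2 * X i ^ 2 := by
    intro i hi
    rw [pderiv_RR, if_pos hi]; ring
  rw [EE, Finset.sum_congr rfl h, ← Finset.mul_sum, RR]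

lemma DD_RR_mul (T : Finset σ) (f : MvPolynomial σ ℂ) :
    DD T (RR T * f)
      = RR T * DD T f + 4 * EE T f + 2 * (T.card : MvPolynomial σ ℂ) * f := by
  rw [DD_mul, DD_RR]
  have h : ∑ i ∈ T, pderiv i (RR T) * pderiv i f = 2 * EE T f := by
    rw [EE, Finset.mul_sum]
    refine Finset.sum_congr rfl fun i hi => ?_
    rw [pderiv_RR, if_pos hi]; ring
  rw [h]; ring

lemma EE_RR_mul (T : Finset σ) (f : MvPolynomial σ ℂ) :
    EE T (RR T * f) = RR T * EE T f + 2 * (RR T * f) := by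
  rw [EE_mul, EE_RR]; ring

/-- The Laplace–Beltrami-type operator attached to `T`. -/
def LB (T : Finset σ) (f : MvPolynomial σ ℂ) : MvPolynomial σ ℂ :=
  RR T * DD T f - EE T (EE T f) - ((T.card : MvPolynomial σ ℂ) - 2) * EE T f

lemma LB_add (T : Finset σ) (f g : MvPolynomial σ ℂ) :
    LB T (f + g) = LB T f + LB T g := by
  simp only [LB, DD_add, EE_add]; ring

lemma LB_sub (T : Finset σ) (f g : MvPolynomial σ ℂ) :
    LB T (f - g) = LB T f - LB T g := by
  simp only [LB, DD_sub, EE_sub]; ring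

lemma LB_smul (T : Finset σ) (c : ℂ) (f : MvPolynomial σ ℂ) :
    LB T (c • f) = c • LB T f := by
  rw [LB, DD_smul, EE_smul, EE_smul, LB]
  simp only [smul_eq_C_mul]; ring

lemma LB_zero (T : Finset σ) : LB T (0 : MvPolynomial σ ℂ) = 0 := by
  simp [LB, DD_zero, EE_zero]

lemma LB_sum {α : Type*} (T : Finset σ) (s : Finset α) (g : α → MvPolynomial σ ℂ) :
    LB T (∑ x ∈ s, g x) = ∑ x ∈ s, LB T (g x) := by
  classical
  induction s using Finset.induction with
  | empty => simp [LB_zero]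
  | insert _ _ hx ih => rw [Finset.sum_insert hx, Finset.sum_insert hx, LB_add, ih]

lemma EE_EE_RR_mul (T : Finset σ) (f : MvPolynomial σ ℂ) :
    EE T (EE T (RR T * f))
      = RR T * EE T (EE T f) + 4 * (RR T * EE T f) + 4 * (RR T * f) := by
  rw [EE_RR_mul, EE_add, EE_RR_mul, EE_two_mul, EE_RR_mul]
  ring

lemma LB_RR_mul (T : Finset σ) (f : MvPolynomial σ ℂ) :
    LB T (RR T * f) = RR T * LB T f := by
  rw [LB, LB, DD_RR_mul, EE_EE_RR_mul, EE_RR_mul]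
  ring

lemma DD_LB (T : Finset σ) (f : MvPolynomial σ ℂ) :
    DD T (LB T f) = LB T (DD T f) := by
  have h4 : DD T (EE T (EE T f))
      = EE T (EE T (DD T f)) + 4 * EE T (DD T f) + 4 * DD T f := by
    rw [DD_EE, DD_EE, EE_add, EE_two_mul]
    ring
  have hconst : DD T (((T.card : MvPolynomial σ ℂ) - 2) * EE T f)
      = ((T.card : MvPolynomial σ ℂ) - 2) * DD T (EE T f) := by
    have h : C ((T.card : ℂ) - 2) = ((T.card : MvPolynomial σ ℂ) - 2) := by
      rw [map_sub, map_natCast, map_ofNat]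
    rw [← h, DD_C_mul]
  rw [LB, DD_sub, DD_sub, hconst, DD_RR_mul, h4, DD_EE, LB]
  ring


lemma pderiv_DD (T : Finset σ) (j : σ) (f : MvPolynomial σ ℂ) :
    pderiv j (DD T f) = DD T (pderiv j f) := by
  rw [DD, map_sum, DD]
  refine Finset.sum_congr rfl fun i _ => ?_
  rw [pderiv_pderiv j i, pderiv_pderiv j i]

lemma pderiv_EE_of_not_mem {T : Finset σ} {j : σ} (hj : j ∉ T) (f : MvPolynomial σ ℂ) :
    pderiv j (EE T f) = EE T (pderiv j f) := by
  rw [pderiv_EE, if_neg hj, add_zero]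

lemma pderiv_RR_mul_of_not_mem {T : Finset σ} {j : σ} (hj : j ∉ T) (f : MvPolynomial σ ℂ) :
    pderiv j (RR T * f) = RR T * pderiv j f := by
  rw [pderiv_mul, pderiv_RR, if_neg hj, zero_mul, zero_add]

lemma natCast_sub_two_eq_C (T : Finset σ) :
    ((T.card : MvPolynomial σ ℂ) - 2) = C ((T.card : ℂ) - 2) := by
  rw [map_sub, map_natCast, map_ofNat]

lemma pderiv_LB_of_not_mem {T : Finset σ} {j : σ} (hj : j ∉ T) (f : MvPolynomial σ ℂ) :
    pderiv j (LB T f) = LB T (pderiv j f) := by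
  rw [LB, map_sub, map_sub, pderiv_RR_mul_of_not_mem hj, pderiv_EE_of_not_mem hj,
    pderiv_EE_of_not_mem hj, pderiv_DD, natCast_sub_two_eq_C, ← smul_eq_C_mul,
    (pderiv j).map_smul, pderiv_EE_of_not_mem hj, LB, natCast_sub_two_eq_C,
    ← smul_eq_C_mul]

lemma DD_compl_LB (T : Finset σ) (f : MvPolynomial σ ℂ) :
    DD Tᶜ (LB T f) = LB T (DD Tᶜ f) := by
  rw [DD, DD, LB_sum]
  refine Finset.sum_congr rfl fun j hj => ?_
  have hjT : j ∉ T := by simpa using hj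
  rw [pderiv_LB_of_not_mem hjT, pderiv_LB_of_not_mem hjT]

lemma DD_univ_split (T : Finset σ) (f : MvPolynomial σ ℂ) :
    DD univ f = DD T f + DD Tᶜ f := by
  rw [DD, DD, DD, Finset.sum_add_sum_compl]

lemma RR_univ_split (T : Finset σ) :
    RR (univ : Finset σ) = RR T + RR Tᶜ := by
  rw [RR, RR, RR, Finset.sum_add_sum_compl]

lemma DD_univ_LB (T : Finset σ) (f : MvPolynomial σ ℂ) :
    DD univ (LB T f) = LB T (DD univ f) := by
  rw [DD_univ_split T, DD_univ_split T f, DD_LB, DD_compl_LB, ← LB_add]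

lemma EE_const_mul {T : Finset σ} {g : MvPolynomial σ ℂ}
    (hg : ∀ i ∈ T, pderiv i g = 0) (f : MvPolynomial σ ℂ) :
    EE T (g * f) = g * EE T f := by
  rw [EE, EE, Finset.mul_sum]
  refine Finset.sum_congr rfl fun i hi => ?_
  rw [pderiv_mul, hg i hi, zero_mul, zero_add]; ring

lemma DD_const_mul {T : Finset σ} {g : MvPolynomial σ ℂ}
    (hg : ∀ i ∈ T, pderiv i g = 0) (f : MvPolynomial σ ℂ) :
    DD T (g * f) = g * DD T f := by
  rw [DD, DD, Finset.mul_sum]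
  refine Finset.sum_congr rfl fun i hi => ?_
  rw [pderiv_mul, hg i hi, zero_mul, zero_add, pderiv_mul, hg i hi, zero_mul, zero_add]

lemma LB_const_mul {T : Finset σ} {g : MvPolynomial σ ℂ}
    (hg : ∀ i ∈ T, pderiv i g = 0) (f : MvPolynomial σ ℂ) :
    LB T (g * f) = g * LB T f := by
  rw [LB, LB, DD_const_mul hg, EE_const_mul hg, EE_const_mul hg]
  ring

lemma LB_RR_univ_mul (T : Finset σ) (f : MvPolynomial σ ℂ) :
    LB T (RR univ * f) = RR univ * LB T f := by
  have hcompl : ∀ i ∈ T, pderiv i (RR Tᶜ) = 0 := by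
    intro i hi
    rw [pderiv_RR, if_neg (by simpa using hi)]
  rw [RR_univ_split T, add_mul, LB_add, LB_RR_mul, LB_const_mul hcompl, add_mul]


lemma degree_eq_sum_univ (v : σ →₀ ℕ) : v.degree = ∑ i, v i := by
  rw [Finsupp.degree]
  exact Finset.sum_subset (Finset.subset_univ _)
    (fun x _ hx => Finsupp.notMem_support_iff.mp hx)

lemma X_mul_monomial_term (v : σ →₀ ℕ) (a : ℂ) (i : σ) :
    X i * monomial (v - Finsupp.single i 1) (a * (v i : ℂ))
      = ((v i : ℕ) : ℂ) • monomial v a := by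
  rcases Nat.eq_zero_or_pos (v i) with h0 | hpos
  · rw [h0]
    simp
  · have hle : Finsupp.single i 1 ≤ v := by
      rw [Finsupp.single_le_iff]; exact hpos
    have : X i * monomial (v - Finsupp.single i 1) (a * (v i : ℂ))
        = monomial (Finsupp.single i 1 + (v - Finsupp.single i 1)) (a * (v i : ℂ)) := by
      rw [monomial_single_add, pow_one]
    rw [this, add_tsub_cancel_of_le hle, smul_monomial]
    congr 1
    rw [smul_eq_mul]
    ring

lemma EE_univ_monomial (v : σ →₀ ℕ) (a : ℂ) :
    EE univ (monomial v a) = ((v.degree : ℕ) : ℂ) • monomial v a := by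
  have h : ∀ i ∈ (univ : Finset σ), X i * pderiv i (monomial v a)
      = ((v i : ℕ) : ℂ) • monomial v a := by
    intro i _
    rw [pderiv_monomial, X_mul_monomial_term]
  rw [EE, Finset.sum_congr rfl h, ← Finset.sum_smul, degree_eq_sum_univ]
  norm_num

lemma degree_of_mem_support {f : MvPolynomial σ ℂ} {d : ℕ} (hf : f.IsHomogeneous d)
    {v : σ →₀ ℕ} (hv : v ∈ f.support) : v.degree = d := by
  by_contra h
  exact (MvPolynomial.mem_support_iff.mp hv) (hf.coeff_eq_zero h)

lemma euler_identity {f : MvPolynomial σ ℂ} {d : ℕ} (hf : f.IsHomogeneous d) :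
    EE univ f = ((d : ℕ) : ℂ) • f := by
  conv_lhs => rw [← support_sum_monomial_coeff f]
  rw [EE_sum]
  have h : ∀ v ∈ f.support, EE univ (monomial v (coeff v f))
      = ((d : ℕ) : ℂ) • monomial v (coeff v f) := by
    intro v hv
    rw [EE_univ_monomial, degree_of_mem_support hf hv]
  rw [Finset.sum_congr rfl h, ← Finset.smul_sum, support_sum_monomial_coeff]

lemma pderiv_isHomogeneous {f : MvPolynomial σ ℂ} {d : ℕ} (hf : f.IsHomogeneous d)
    (i : σ) : (pderiv i f).IsHomogeneous (d - 1) := by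
  conv_lhs => rw [← support_sum_monomial_coeff f]
  rw [map_sum]
  apply IsHomogeneous.sum
  intro v hv
  rw [pderiv_monomial]
  rcases Nat.eq_zero_or_pos (v i) with h0 | hpos
  · rw [h0, Nat.cast_zero, mul_zero, monomial_zero]
    exact isHomogeneous_zero _ _ _
  · apply isHomogeneous_monomial
    have hd : v.degree = d := degree_of_mem_support hf hv
    have h1 : (v - Finsupp.single i 1).degree
        = (v i - 1) + ∑ j ∈ (univ : Finset σ).erase i, v j := by
      rw [degree_eq_sum_univ, ← Finset.add_sum_erase _ _ (Finset.mem_univ i)]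
      congr 1
      · rw [Finsupp.tsub_apply, Finsupp.single_eq_same]
      · exact Finset.sum_congr rfl fun j hj => by
          rw [Finsupp.tsub_apply,
            Finsupp.single_eq_of_ne' (Ne.symm (Finset.ne_of_mem_erase hj)), Nat.sub_zero]
    have h2 : v.degree = v i + ∑ j ∈ (univ : Finset σ).erase i, v j := by
      rw [degree_eq_sum_univ, ← Finset.add_sum_erase _ _ (Finset.mem_univ i)]
    omega

lemma pderiv_eq_zero_of_isHomogeneous_zero {f : MvPolynomial σ ℂ}
    (hf : f.IsHomogeneous 0) (i : σ) : pderiv i f = 0 := by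
  conv_lhs => rw [← support_sum_monomial_coeff f]
  rw [map_sum]
  apply Finset.sum_eq_zero
  intro v hv
  have hv0 : v.degree = 0 := degree_of_mem_support hf hv
  have : v i = 0 := by
    have := (Finsupp.degree_eq_zero_iff v).mp hv0
    rw [this]; rfl
  rw [pderiv_monomial, this, Nat.cast_zero, mul_zero, monomial_zero]

lemma DD_isHomogeneous {f : MvPolynomial σ ℂ} {d : ℕ} (hf : f.IsHomogeneous d)
    (T : Finset σ) : (DD T f).IsHomogeneous (d - 2) := by
  rw [DD]
  apply IsHomogeneous.sum
  intro i _
  have h1 := pderiv_isHomogeneous (pderiv_isHomogeneous hf i) i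
  have : d - 1 - 1 = d - 2 := by omega
  rwa [this] at h1

lemma DD_eq_zero_of_le_one {f : MvPolynomial σ ℂ} {d : ℕ} (hf : f.IsHomogeneous d)
    (hd : d ≤ 1) (T : Finset σ) : DD T f = 0 := by
  rw [DD]
  apply Finset.sum_eq_zero
  intro i _
  have h1 : (pderiv i f).IsHomogeneous 0 := by
    have := pderiv_isHomogeneous hf i
    rwa [Nat.sub_eq_zero_of_le hd] at this
  simp [pderiv_eq_zero_of_isHomogeneous_zero h1 i]

lemma RR_isHomogeneous (T : Finset σ) : (RR T).IsHomogeneous 2 := by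
  rw [RR]
  apply IsHomogeneous.sum
  intro i _
  exact isHomogeneous_X_pow i 2


lemma vanish_of_hom [Nonempty σ] :
    ∀ d : ℕ, ∀ f : MvPolynomial σ ℂ, f.IsHomogeneous d →
      ∀ c : ℝ, c ≤ 0 → f = (c : ℂ) • (RR univ * DD univ f) → f = 0 := by
  intro d
  induction d using Nat.strong_induction_on with
  | _ d ih =>
  intro f hf c hc he
  by_cases hd : d ≤ 1
  · rw [DD_eq_zero_of_le_one hf hd, mul_zero, smul_zero] at he; exact he
  · push_neg at hd
    set g := DD univ f with hg
    have hgh : g.IsHomogeneous (d - 2) := DD_isHomogeneous hf univ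
    have hEg : EE univ g = (((d - 2 : ℕ) : ℕ) : ℂ) • g := euler_identity hgh
    have hstep : g = (c : ℂ) • (RR univ * DD univ g)
        + ((c : ℂ) * (4 * ((d - 2 : ℕ) : ℂ) + 2 * (Fintype.card σ : ℂ))) • g := by
      conv_lhs => rw [hg, he]
      rw [DD_smul, DD_RR_mul, hEg]
      simp only [smul_eq_C_mul, map_mul, map_add, map_ofNat, map_natCast,
        Finset.card_univ]
      ring
    set A : ℝ := 4 * ((d - 2 : ℕ) : ℝ) + 2 * (Fintype.card σ : ℝ) with hA
    have hA0 : 0 ≤ A := by positivity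
    set t : ℝ := 1 - c * A with ht
    have ht0 : 0 < t := by nlinarith
    have htC : (t : ℂ) = 1 - (c : ℂ) * (4 * ((d - 2 : ℕ) : ℂ) + 2 * (Fintype.card σ : ℂ)) := by
      rw [ht, hA]; push_cast; ring
    have h2 : (t : ℂ) • g = (c : ℂ) • (RR univ * DD univ g) := by
      rw [htC, sub_smul, one_smul]
      simp only [smul_eq_C_mul, map_mul, map_add, map_ofNat, map_natCast] at hstep ⊢
      linear_combination hstep
    have h3 : g = ((c / t : ℝ) : ℂ) • (RR univ * DD univ g) := by
      have htne : (t : ℂ) ≠ 0 := by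
        exact_mod_cast ne_of_gt ht0
      calc g = (t : ℂ)⁻¹ • ((t : ℂ) • g) := by
              rw [smul_smul, inv_mul_cancel₀ htne, one_smul]
        _ = ((c / t : ℝ) : ℂ) • (RR univ * DD univ g) := by
              rw [h2, smul_smul]
              congr 1
              push_cast
              ring
    have hct : c / t ≤ 0 := div_nonpos_of_nonpos_of_nonneg hc ht0.le
    have hg0 : g = 0 := ih (d - 2) (by omega) g hgh (c / t) hct h3
    rw [he, hg0, mul_zero, smul_zero]


lemma eq_zero_of_harmonic_RR_mul [Nonempty σ] (f : MvPolynomial σ ℂ)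
    (h : DD univ (RR univ * f) = 0) : f = 0 := by
  set N := f.totalDegree with hN
  have hcomp : ∀ j, j ∈ Finset.range (N + 1) →
      DD univ (RR univ * homogeneousComponent j f) = 0 := by
    intro j hj
    have hsplit : DD univ (RR univ * f)
        = ∑ j' ∈ Finset.range (N + 1),
            DD univ (RR univ * homogeneousComponent j' f) := by
      conv_lhs => rw [← sum_homogeneousComponent f]
      rw [Finset.mul_sum, DD_sum]
    have hhom : ∀ j' ∈ Finset.range (N + 1),
        (DD univ (RR univ * homogeneousComponent j' f)).IsHomogeneous j' := by
      intro j' _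
      have h1 : (RR univ * homogeneousComponent j' f).IsHomogeneous (2 + j') :=
        (RR_isHomogeneous univ).mul (homogeneousComponent_isHomogeneous j' f)
      have h2 := DD_isHomogeneous h1 univ
      have : 2 + j' - 2 = j' := by omega
      rwa [this] at h2
    have h0 : (0 : MvPolynomial σ ℂ) = homogeneousComponent j (DD univ (RR univ * f)) := by
      rw [h, map_zero]
    rw [hsplit, map_sum] at h0
    have hterm : ∀ j' ∈ Finset.range (N + 1),
        homogeneousComponent j (DD univ (RR univ * homogeneousComponent j' f))
          = if j = j' then DD univ (RR univ * homogeneousComponent j' f) else 0 := by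
      intro j' hj'
      exact homogeneousComponent_of_mem ((mem_homogeneousSubmodule _ _).mpr (hhom j' hj'))
    rw [Finset.sum_congr rfl hterm, Finset.sum_ite_eq (Finset.range (N+1)) j _] at h0
    rw [if_pos hj] at h0
    exact h0.symm
  have hzero : ∀ j ∈ Finset.range (N + 1), homogeneousComponent j f = 0 := by
    intro j hj
    set fj := homogeneousComponent j f with hfj
    have hfjh : fj.IsHomogeneous j := homogeneousComponent_isHomogeneous j f
    have hDR := DD_RR_mul (univ : Finset σ) fj
    rw [hcomp j hj, euler_identity hfjh, Finset.card_univ] at hDR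
    set β : ℝ := 4 * (j : ℝ) + 2 * (Fintype.card σ : ℝ) with hβ
    have hβpos : 0 < β := by
      have hcard : 0 < Fintype.card σ := Fintype.card_pos
      have : (1 : ℝ) ≤ (Fintype.card σ : ℝ) := by exact_mod_cast hcard
      nlinarith
    have hβC : (β : ℂ) ≠ 0 := by
      exact_mod_cast ne_of_gt hβpos
    have key : fj = ((-β⁻¹ : ℝ) : ℂ) • (RR univ * DD univ fj) := by
      have e1 : (β : ℂ) • fj = -(RR univ * DD univ fj) := by
        simp only [smul_eq_C_mul, map_natCast] at hDR
        rw [hβ, smul_eq_C_mul]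
        push_cast
        simp only [map_add, map_mul, map_ofNat, map_natCast]
        linear_combination -hDR
      calc fj = (β : ℂ)⁻¹ • ((β : ℂ) • fj) := by
            rw [smul_smul, inv_mul_cancel₀ hβC, one_smul]
        _ = ((-β⁻¹ : ℝ) : ℂ) • (RR univ * DD univ fj) := by
            rw [e1, smul_neg, ← neg_smul]
            congr 1
            push_cast
            ring
    have hneg : (-β⁻¹ : ℝ) ≤ 0 := by
      have : 0 < β⁻¹ := inv_pos.mpr hβpos
      linarith
    exact vanish_of_hom j fj hfjh _ hneg key
  conv_lhs => rw [← sum_homogeneousComponent f]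
  exact Finset.sum_eq_zero hzero


lemma EE_univ_split (T : Finset σ) (f : MvPolynomial σ ℂ) :
    EE univ f = EE T f + EE Tᶜ f := by
  rw [EE, EE, EE, Finset.sum_add_sum_compl]

lemma LB_eigen [Nonempty σ] (T : Finset σ) (F H R W : MvPolynomial σ ℂ) (lam : ℂ)
    (hdiff : F - H = RR univ * R) (hH : DD univ H = 0)
    (hF : LB T F = lam • F + RR univ * W) :
    LB T H = lam • H := by
  have hHF : H = F - RR univ * R := by
    rw [← hdiff]; ring
  have h1 : LB T H = LB T F - RR univ * LB T R := by
    rw [hHF, LB_sub, LB_RR_univ_mul]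
  have hG : LB T H - lam • H = RR univ * (W - LB T R + lam • R) := by
    rw [h1, hF, hHF]
    simp only [smul_eq_C_mul]
    ring
  have hDG : DD univ (LB T H - lam • H) = 0 := by
    rw [DD_sub, DD_smul, hH, smul_zero, sub_zero, DD_univ_LB, hH, LB_zero]
  rw [hG] at hDG
  have h0 := eq_zero_of_harmonic_RR_mul _ hDG
  rw [h0, mul_zero] at hG
  exact sub_eq_zero.mp hG

end LBAux

open LBAux

theorem stmt14 (p q s k i n : ℕ) (hp : 1 ≤ p) (hq : 1 ≤ q) (hn : 2 * s + k + i = n)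
    (Pk Qi : MvPolynomial (Fin (p + q)) ℂ)
    (hPk_supp : Pk ∈ MvPolynomial.supported ℂ {j : Fin (p + q) | (j : ℕ) < p})
    (hPk_harm : lap (p + q) Pk = 0) (hPk_hom : Pk.IsHomogeneous k)
    (hQi_supp : Qi ∈ MvPolynomial.supported ℂ {j : Fin (p + q) | p ≤ (j : ℕ)})
    (hQi_harm : lap (p + q) Qi = 0) (hQi_hom : Qi.IsHomogeneous i)
    (H : MvPolynomial (Fin (p + q)) ℂ) (hH_harm : lap (p + q) H = 0)
    (hH_diff : ∃ R, u2 p q ^ s * Pk * Qi - H = r2 (p + q) * R) :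
    u2 p q * lapU p q H - eulerU p q (eulerU p q H) - ((p : ℂ) - 2) • eulerU p q H
        = (-(k : ℂ) * ((k : ℂ) + (p : ℂ) - 2)) • H ∧
    v2 p q * lapV p q H - eulerV p q (eulerV p q H) - ((q : ℂ) - 2) • eulerV p q H
        = (-(i : ℂ) * ((i : ℂ) + (q : ℂ) - 2)) • H ∧
    r2 (p + q) * lap (p + q) H - eulerOp (p + q) (eulerOp (p + q) H)
        - (((p : ℂ) + (q : ℂ)) - 2) • eulerOp (p + q) H
        = (-(n : ℂ) * ((n : ℂ) + (p : ℂ) + (q : ℂ) - 2)) • H := by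
  classical
  haveI : Nonempty (Fin (p + q)) := ⟨⟨0, by omega⟩⟩
  obtain ⟨R, hR⟩ := hH_diff
  set lamk : ℂ := -(k : ℂ) * ((k : ℂ) + (p : ℂ) - 2) with hlamk
  set lami : ℂ := -(i : ℂ) * ((i : ℂ) + (q : ℂ) - 2) with hlami
  set lamn : ℂ := -(n : ℂ) * ((n : ℂ) + (p : ℂ) + (q : ℂ) - 2) with hlamn
  set Tu : Finset (Fin (p + q)) := univ.filter (fun j : Fin (p + q) => (j : ℕ) < p) with hTu
  set Tv : Finset (Fin (p + q)) := univ.filter (fun j : Fin (p + q) => p ≤ (j : ℕ)) with hTv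
  have cardTu : Tu.card = p := by
    rw [hTu, Finset.card_filter]
    have h1 : ∑ j : Fin (p + q), (if (j : ℕ) < p then 1 else 0) = p := by
      rw [Fin.sum_univ_add]
      simp [Fin.is_lt]
    exact h1
  have cardTv : Tv.card = q := by
    rw [hTv, Finset.card_filter]
    have h1 : ∑ j : Fin (p + q), (if p ≤ (j : ℕ) then 1 else 0) = q := by
      rw [Fin.sum_univ_add]
      have ha : (∑ j : Fin p,
          if p ≤ ((Fin.castAdd q j : Fin (p + q)) : ℕ) then (1 : ℕ) else 0) = 0 :=
        Finset.sum_eq_zero fun j _ => by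
          have := j.is_lt
          simp only [Fin.coe_castAdd]
          rw [if_neg (by omega)]
      have hb : (∑ j : Fin q,
          if p ≤ ((Fin.natAdd p j : Fin (p + q)) : ℕ) then (1 : ℕ) else 0) = q := by
        have : ∀ j : Fin q,
            (if p ≤ ((Fin.natAdd p j : Fin (p + q)) : ℕ) then (1 : ℕ) else 0) = 1 := by
          intro j
          simp only [Fin.coe_natAdd]
          rw [if_pos (Nat.le_add_right p j)]
        rw [Finset.sum_congr rfl fun j _ => this j]
        simp
      rw [ha, hb, zero_add]
    exact h1
  have hPk0 : ∀ j : Fin (p + q), ¬ ((j : ℕ) < p) → pderiv j Pk = 0 := by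
    intro j hj
    refine pderiv_eq_zero_of_notMem_vars (fun hmem => hj ?_)
    exact MvPolynomial.mem_supported.mp hPk_supp (Finset.mem_coe.mpr hmem)
  have hQi0 : ∀ j : Fin (p + q), ¬ (p ≤ (j : ℕ)) → pderiv j Qi = 0 := by
    intro j hj
    refine pderiv_eq_zero_of_notMem_vars (fun hmem => hj ?_)
    exact MvPolynomial.mem_supported.mp hQi_supp (Finset.mem_coe.mpr hmem)
  have hH0 : DD univ H = 0 := hH_harm
  have hdiff : u2 p q ^ s * Pk * Qi - H = RR univ * R := hR
  -- Part 1 : the u-operator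
  have hDDPk : DD Tu Pk = 0 := by
    have hc : DD Tuᶜ Pk = 0 := by
      rw [DD]
      refine Finset.sum_eq_zero fun j hj => ?_
      have hjp : ¬ ((j : ℕ) < p) := by
        have := Finset.mem_compl.mp hj
        simpa [hTu] using this
      rw [hPk0 j hjp, map_zero]
    have hsplit := DD_univ_split Tu Pk
    have huniv : DD univ Pk = 0 := hPk_harm
    rw [huniv, hc, add_zero] at hsplit
    exact hsplit.symm
  have hEEPk : EE Tu Pk = ((k : ℕ) : ℂ) • Pk := by
    have hc : EE Tuᶜ Pk = 0 := by
      rw [EE]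
      refine Finset.sum_eq_zero fun j hj => ?_
      have hjp : ¬ ((j : ℕ) < p) := by
        have := Finset.mem_compl.mp hj
        simpa [hTu] using this
      rw [hPk0 j hjp, mul_zero]
    have hsplit := EE_univ_split Tu Pk
    rw [euler_identity hPk_hom, hc, add_zero] at hsplit
    exact hsplit.symm
  have hLBPk : LB Tu Pk = lamk • Pk := by
    rw [LB, hDDPk, hEEPk, EE_smul, hEEPk]
    have hc : ((Tu.card : MvPolynomial (Fin (p + q)) ℂ))
        = ((p : ℕ) : MvPolynomial (Fin (p + q)) ℂ) := by rw [cardTu]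
    rw [hc, hlamk]
    simp only [smul_eq_C_mul, map_mul, map_add, map_sub, map_neg, map_ofNat, map_natCast]
    ring
  have hQc : ∀ j ∈ Tu, pderiv j Qi = 0 := by
    intro j hj
    have hjp : (j : ℕ) < p := by simpa [hTu] using hj
    exact hQi0 j (by omega)
  have hPQ : LB Tu (Pk * Qi) = lamk • (Pk * Qi) := by
    rw [mul_comm Pk Qi, LB_const_mul hQc, hLBPk, mul_smul_comm, mul_comm Qi Pk]
  have hFs : ∀ t : ℕ, LB Tu (u2 p q ^ t * Pk * Qi) = lamk • (u2 p q ^ t * Pk * Qi) := by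
    intro t
    induction t with
    | zero => simpa using hPQ
    | succ t iht =>
        have hrw : u2 p q ^ (t + 1) * Pk * Qi = RR Tu * (u2 p q ^ t * Pk * Qi) := by
          have hu : u2 p q = RR Tu := rfl
          rw [hu]; ring
        rw [hrw, LB_RR_mul, iht, mul_smul_comm, ← hrw]
  have hmain1 : LB Tu H = lamk • H := by
    apply LB_eigen Tu (u2 p q ^ s * Pk * Qi) H R 0 lamk hdiff hH0
    rw [hFs s, mul_zero, add_zero]
  have hgoal1 : LB Tu H = u2 p q * lapU p q H - eulerU p q (eulerU p q H)
      - ((p : ℂ) - 2) • eulerU p q H := by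
    rw [LB]
    have hc : ((Tu.card : MvPolynomial (Fin (p + q)) ℂ))
        = ((p : ℕ) : MvPolynomial (Fin (p + q)) ℂ) := by rw [cardTu]
    rw [hc, smul_eq_C_mul,
      show ((p : ℕ) : MvPolynomial (Fin (p + q)) ℂ) - 2 = C ((p : ℂ) - 2) from by
        rw [map_sub, map_natCast, map_ofNat]]
    rfl
  -- Part 2 : the v-operator
  have hDDQi : DD Tv Qi = 0 := by
    have hc : DD Tvᶜ Qi = 0 := by
      rw [DD]
      refine Finset.sum_eq_zero fun j hj => ?_
      have hjp : ¬ (p ≤ (j : ℕ)) := by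
        have := Finset.mem_compl.mp hj
        simpa [hTv] using this
      rw [hQi0 j hjp, map_zero]
    have hsplit := DD_univ_split Tv Qi
    have huniv : DD univ Qi = 0 := hQi_harm
    rw [huniv, hc, add_zero] at hsplit
    exact hsplit.symm
  have hEEQi : EE Tv Qi = ((i : ℕ) : ℂ) • Qi := by
    have hc : EE Tvᶜ Qi = 0 := by
      rw [EE]
      refine Finset.sum_eq_zero fun j hj => ?_
      have hjp : ¬ (p ≤ (j : ℕ)) := by
        have := Finset.mem_compl.mp hj
        simpa [hTv] using this
      rw [hQi0 j hjp, mul_zero]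
    have hsplit := EE_univ_split Tv Qi
    rw [euler_identity hQi_hom, hc, add_zero] at hsplit
    exact hsplit.symm
  have hLBQi : LB Tv Qi = lami • Qi := by
    rw [LB, hDDQi, hEEQi, EE_smul, hEEQi]
    have hc : ((Tv.card : MvPolynomial (Fin (p + q)) ℂ))
        = ((q : ℕ) : MvPolynomial (Fin (p + q)) ℂ) := by rw [cardTv]
    rw [hc, hlami]
    simp only [smul_eq_C_mul, map_mul, map_add, map_sub, map_neg, map_ofNat, map_natCast]
    ring
  have hUc : ∀ j ∈ Tv, pderiv j (u2 p q ^ s * Pk) = 0 := by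
    intro j hj
    have hjp : p ≤ (j : ℕ) := by simpa [hTv] using hj
    have h1 : pderiv j (u2 p q) = 0 := by
      have hu : u2 p q = RR Tu := rfl
      rw [hu, pderiv_RR, if_neg (by simp [hTu]; omega)]
    have h2 : pderiv j (u2 p q ^ s) = 0 := by
      rw [pderiv_pow, h1, mul_zero]
    have h3 : pderiv j Pk = 0 := hPk0 j (by omega)
    rw [pderiv_mul, h2, h3, zero_mul, mul_zero, add_zero]
  have hFv : LB Tv (u2 p q ^ s * Pk * Qi) = lami • (u2 p q ^ s * Pk * Qi) := by
    rw [LB_const_mul hUc, hLBQi, mul_smul_comm]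
  have hmain2 : LB Tv H = lami • H := by
    apply LB_eigen Tv (u2 p q ^ s * Pk * Qi) H R 0 lami hdiff hH0
    rw [hFv, mul_zero, add_zero]
  have hgoal2 : LB Tv H = v2 p q * lapV p q H - eulerV p q (eulerV p q H)
      - ((q : ℂ) - 2) • eulerV p q H := by
    rw [LB]
    have hc : ((Tv.card : MvPolynomial (Fin (p + q)) ℂ))
        = ((q : ℕ) : MvPolynomial (Fin (p + q)) ℂ) := by rw [cardTv]
    rw [hc, smul_eq_C_mul,
      show ((q : ℕ) : MvPolynomial (Fin (p + q)) ℂ) - 2 = C ((q : ℂ) - 2) from by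
        rw [map_sub, map_natCast, map_ofNat]]
    rfl
  -- Part 3 : the full operator
  have hFhom : (u2 p q ^ s * Pk * Qi).IsHomogeneous n := by
    have h1 : (u2 p q).IsHomogeneous 2 := RR_isHomogeneous Tu
    have h2 := ((h1.pow s).mul hPk_hom).mul hQi_hom
    rwa [hn] at h2
  have hEF : EE univ (u2 p q ^ s * Pk * Qi)
      = ((n : ℕ) : ℂ) • (u2 p q ^ s * Pk * Qi) := euler_identity hFhom
  have hcardU : (((univ : Finset (Fin (p + q))).card : MvPolynomial (Fin (p + q)) ℂ))
      = ((p + q : ℕ) : MvPolynomial (Fin (p + q)) ℂ) := by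
    rw [Finset.card_univ, Fintype.card_fin]
  have hFu : LB univ (u2 p q ^ s * Pk * Qi)
      = lamn • (u2 p q ^ s * Pk * Qi)
        + RR univ * DD univ (u2 p q ^ s * Pk * Qi) := by
    rw [LB, hEF, EE_smul, hEF, hcardU, hlamn]
    simp only [smul_eq_C_mul, map_mul, map_add, map_sub, map_neg, map_ofNat, map_natCast]
    push_cast
    ring
  have hmain3 : LB univ H = lamn • H :=
    LB_eigen univ (u2 p q ^ s * Pk * Qi) H R (DD univ (u2 p q ^ s * Pk * Qi)) lamn
      hdiff hH0 hFu
  have hgoal3 : LB univ H = r2 (p + q) * lap (p + q) H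
      - eulerOp (p + q) (eulerOp (p + q) H)
      - (((p : ℂ) + (q : ℂ)) - 2) • eulerOp (p + q) H := by
    rw [LB, hcardU, smul_eq_C_mul,
      show ((p + q : ℕ) : MvPolynomial (Fin (p + q)) ℂ) - 2
          = C (((p : ℂ) + (q : ℂ)) - 2) from by
        rw [map_sub, map_add, map_natCast, map_natCast, map_ofNat]; push_cast; ring]
    rfl
  exact ⟨by rw [← hgoal1]; exact hmain1,
    by rw [← hgoal2]; exact hmain2,
    by rw [← hgoal3]; exact hmain3⟩

end
end

section
/- Let m = p + q with q ≥ 1. If F is a Clifford-algebra-valued polynomial in m variables with ∂_v F = 0 and F = x·G for some Clifford-algebra-valued polynomial G (where x·G = ∑_{i=1}^m X_i·e_i·G is multiplication by the full vector variable), then F = 0. -/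
open scoped TensorProduct
open MvPolynomial

noncomputable section

/-- The quadratic form `Q(x) = -(x₁² + ⋯ + x_m²)` on `ℂ^m`. -/
def Qf (m : ℕ) : QuadraticForm ℂ (Fin m → ℂ) :=
  QuadraticMap.weightedSumSquares ℂ (fun _ : Fin m => (-1 : ℂ))

/-- The complex Clifford algebra `ℂ_m`. -/
abbrev Cl (m : ℕ) := CliffordAlgebra (Qf m)

/-- The generators `e_i`, satisfying `e_i e_j + e_j e_i = -2δ_ij`. -/
def gen (m : ℕ) (i : Fin m) : Cl m := CliffordAlgebra.ι (Qf m) (Pi.single i 1)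

/-- Clifford-algebra-valued polynomials `𝒫 = MvPolynomial (Fin m) ℂ ⊗[ℂ] ℂ_m`. -/
abbrev CPoly (m : ℕ) := MvPolynomial (Fin m) ℂ ⊗[ℂ] Cl m

/-- Partial derivative `∂_{X_i}` acting on the polynomial factor. -/
def pd (m : ℕ) (i : Fin m) : CPoly m →ₗ[ℂ] CPoly m :=
  LinearMap.rTensor (Cl m) (MvPolynomial.pderiv i).toLinearMap

/-- The vector variable `x = ∑ X_i ⊗ e_i` as an element of `𝒫`. -/
def xE (m : ℕ) : CPoly m := ∑ i, (X i : MvPolynomial (Fin m) ℂ) ⊗ₜ[ℂ] gen m i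

/-- The Dirac operator `∂F = ∑ e_i ∂_{X_i} F`. -/
def dirac (m : ℕ) (F : CPoly m) : CPoly m :=
  ∑ i, ((1 : MvPolynomial (Fin m) ℂ) ⊗ₜ[ℂ] gen m i) * pd m i F

/-- The Dirac operator in the `v`-variables (the last `q` variables). -/
def diracV (p q : ℕ) (F : CPoly (p + q)) : CPoly (p + q) :=
  ∑ i ∈ Finset.univ.filter (fun i : Fin (p + q) => p ≤ (i : ℕ)),
    ((1 : MvPolynomial (Fin (p + q)) ℂ) ⊗ₜ[ℂ] gen (p + q) i) * pd (p + q) i F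

namespace Stmt16Aux

lemma gen_sq (m : ℕ) (i : Fin m) : gen m i * gen m i = -1 := by
  rw [gen, CliffordAlgebra.ι_sq_scalar]
  simp [Qf, QuadraticMap.weightedSumSquares_apply, Pi.single_apply]
  exact (map_neg (algebraMap ℂ (Cl m)) 1).trans (congrArg Neg.neg (map_one (algebraMap ℂ (Cl m))))

lemma gen_anti (m : ℕ) {i j : Fin m} (h : i ≠ j) : gen m i * gen m j + gen m j * gen m i = 0 := by
  rw [gen, gen]
  apply CliffordAlgebra.ι_mul_ι_add_swap_of_isOrtho
  rw [QuadraticMap.isOrtho_def]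
  simp only [Qf, QuadraticMap.weightedSumSquares_apply, Pi.add_apply, Pi.single_apply]
  rw [← Finset.sum_add_distrib]
  apply Finset.sum_congr rfl
  intro k _
  by_cases hk : k = i <;> by_cases hk' : k = j <;> simp_all

/-- left multiplication by `1 ⊗ c`. -/
def EC (m : ℕ) (c : Cl m) : CPoly m →ₗ[ℂ] CPoly m :=
  LinearMap.mulLeft ℂ ((1 : MvPolynomial (Fin m) ℂ) ⊗ₜ[ℂ] c)

/-- left multiplication by `X j ⊗ 1`. -/
def MX (m : ℕ) (j : Fin m) : CPoly m →ₗ[ℂ] CPoly m :=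
  LinearMap.mulLeft ℂ ((X j : MvPolynomial (Fin m) ℂ) ⊗ₜ[ℂ] (1 : Cl m))

lemma EC_apply (m : ℕ) (c : Cl m) (F : CPoly m) :
    EC m c F = ((1 : MvPolynomial (Fin m) ℂ) ⊗ₜ[ℂ] c) * F := rfl

lemma MX_apply (m : ℕ) (j : Fin m) (F : CPoly m) :
    MX m j F = ((X j : MvPolynomial (Fin m) ℂ) ⊗ₜ[ℂ] (1 : Cl m)) * F := rfl

lemma EC_EC (m : ℕ) (c d : Cl m) (F : CPoly m) : EC m c (EC m d F) = EC m (c * d) F := by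
  simp only [EC_apply, ← mul_assoc, Algebra.TensorProduct.tmul_mul_tmul, one_mul]

lemma EC_sq (m : ℕ) (i : Fin m) (F : CPoly m) : EC m (gen m i) (EC m (gen m i) F) = -F := by
  rw [EC_EC, gen_sq, EC_apply, TensorProduct.tmul_neg, ← Algebra.TensorProduct.one_def]
  exact neg_one_mul F

lemma EC_anti (m : ℕ) {i j : Fin m} (h : i ≠ j) (F : CPoly m) :
    EC m (gen m i) (EC m (gen m j) F) + EC m (gen m j) (EC m (gen m i) F) = 0 := by
  rw [EC_EC, EC_EC, EC_apply, EC_apply, ← add_mul, ← TensorProduct.tmul_add, gen_anti m h,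
    TensorProduct.tmul_zero, zero_mul]

lemma EC_MX_comm (m : ℕ) (c : Cl m) (j : Fin m) (F : CPoly m) :
    EC m c (MX m j F) = MX m j (EC m c F) := by
  simp only [EC_apply, MX_apply, ← mul_assoc, Algebra.TensorProduct.tmul_mul_tmul,
    one_mul, mul_one]

lemma pd_tmul (m : ℕ) (i : Fin m) (P : MvPolynomial (Fin m) ℂ) (a : Cl m) :
    pd m i (P ⊗ₜ[ℂ] a) = (pderiv i P) ⊗ₜ[ℂ] a := rfl

lemma pd_EC (m : ℕ) (i : Fin m) (c : Cl m) (F : CPoly m) :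
    pd m i (EC m c F) = EC m c (pd m i F) := by
  induction F using TensorProduct.induction_on with
  | zero => simp
  | tmul P a =>
      simp only [EC_apply, Algebra.TensorProduct.tmul_mul_tmul, one_mul, pd_tmul]
  | add F G hF hG => simp [map_add, hF, hG]

lemma pd_MX (m : ℕ) (i j : Fin m) (F : CPoly m) :
    pd m i (MX m j F) = (if i = j then F else 0) + MX m j (pd m i F) := by
  induction F using TensorProduct.induction_on with
  | zero => simp
  | tmul P a =>
      by_cases h : i = j
      · subst h
        simp [MX_apply, Algebra.TensorProduct.tmul_mul_tmul, pd_tmul, pderiv_mul,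
          TensorProduct.add_tmul]
        abel
      · simp [MX_apply, Algebra.TensorProduct.tmul_mul_tmul, pd_tmul, pderiv_mul,
          TensorProduct.add_tmul, h, Ne.symm h]
  | add F G hF hG =>
      simp only [map_add, hF, hG]
      split_ifs <;> abel

lemma pderiv_comm' {σ : Type*} [DecidableEq σ] (i j : σ) (P : MvPolynomial σ ℂ) :
    pderiv i (pderiv j P) = pderiv j (pderiv i P) := by
  induction P using MvPolynomial.induction_on with
  | C a => simp [pderiv_C]
  | add f g hf hg => simp [hf, hg]
  | mul_X f k hf =>
      simp only [pderiv_mul, pderiv_X, map_add, hf]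
      simp only [pderiv_mul, pderiv_X, Pi.single_apply]
      split_ifs <;> simp <;> abel

lemma pd_pd (m : ℕ) (i j : Fin m) (F : CPoly m) :
    pd m i (pd m j F) = pd m j (pd m i F) := by
  induction F using TensorProduct.induction_on with
  | zero => simp
  | tmul P a => simp only [pd_tmul, pderiv_comm']
  | add F G hF hG => simp [map_add, hF, hG]


section Poly
variable {σ : Type*} [DecidableEq σ]


lemma single_add_sub {i : σ} {s : σ →₀ ℕ} (h : s i ≠ 0) :
    Finsupp.single i 1 + (s - Finsupp.single i 1) = s := by
  ext k
  rcases eq_or_ne k i with rfl | hk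
  · simp [Finsupp.single_apply]
    omega
  · simp [Finsupp.single_apply, Ne.symm hk]

lemma diag_mono (i : σ) (s : σ →₀ ℕ) (a : ℂ) :
    X i * pderiv i (monomial s a) = ((s i : ℂ)) • monomial s a := by
  rw [pderiv_monomial]
  by_cases h : s i = 0
  · simp [h]
  · rw [X, monomial_mul, single_add_sub h, one_mul, smul_monomial, smul_eq_mul, mul_comm]

/-- the Euler-type operator in selected variables -/
def Lv (T : Finset σ) : MvPolynomial σ ℂ →ₗ[ℂ] MvPolynomial σ ℂ :=
  ∑ i ∈ T, (LinearMap.mulLeft ℂ (X i : MvPolynomial σ ℂ)) ∘ₗ (pderiv i).toLinearMap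

lemma Lv_mono (T : Finset σ) (s : σ →₀ ℕ) (a : ℂ) :
    Lv T (monomial s a) = (((∑ i ∈ T, s i : ℕ) : ℂ)) • monomial s a := by
  rw [Lv, LinearMap.sum_apply]
  have : ∀ i ∈ T, ((LinearMap.mulLeft ℂ (X i : MvPolynomial σ ℂ)) ∘ₗ
      (pderiv i).toLinearMap) (monomial s a) = ((s i : ℂ)) • monomial s a := by
    intro i _
    simpa using diag_mono i s a
  rw [Finset.sum_congr rfl this, ← Finset.sum_smul]
  congr 1
  push_cast
  rfl

lemma Lv_inj (T : Finset σ) (c : ℂ) (hc : ∀ k : ℕ, c + 2 * k ≠ 0) :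
    Function.Injective
      (c • (LinearMap.id : MvPolynomial σ ℂ →ₗ[ℂ] MvPolynomial σ ℂ) + (2:ℂ) • Lv T) := by
  set Tmap := c • (LinearMap.id : MvPolynomial σ ℂ →ₗ[ℂ] MvPolynomial σ ℂ) + (2:ℂ) • Lv T
    with hT
  have key : ∀ P : MvPolynomial σ ℂ, Tmap P = 0 → P = 0 := by
    intro P hP
    ext α
    by_cases hα : α ∈ P.support
    swap
    · simpa using (MvPolynomial.notMem_support_iff.mp hα)
    have hTP : Tmap P = ∑ s ∈ P.support, (c + 2 * ((∑ i ∈ T, s i : ℕ) : ℂ)) •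
        monomial s (coeff s P) := by
      rw [hT]
      conv_lhs => rw [P.as_sum]
      simp only [LinearMap.add_apply, LinearMap.smul_apply, LinearMap.id_apply, map_sum,
        Lv_mono, Finset.smul_sum]
      apply Finset.sum_congr rfl
      intro s _
      rw [add_smul, mul_smul]
    have h2 : coeff α (Tmap P) = (c + 2 * ((∑ i ∈ T, α i : ℕ) : ℂ)) * coeff α P := by
      rw [hTP]
      rw [coeff_sum]
      rw [Finset.sum_eq_single_of_mem α hα]
      · rw [coeff_smul, coeff_monomial, if_pos rfl, smul_eq_mul]
      · intro s _ hs
        rw [coeff_smul, coeff_monomial, if_neg hs, smul_zero]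
    rw [hP] at h2
    have h3 := hc (∑ i ∈ T, α i)
    have := (mul_eq_zero.mp h2.symm).resolve_left h3
    exact this
  intro P Q h
  have : Tmap (P - Q) = 0 := by rw [map_sub, h, sub_self]
  exact sub_eq_zero.mp (key _ this)

lemma td_pderiv (i : σ) (P : MvPolynomial σ ℂ) (n : ℕ) (h : P.totalDegree ≤ n + 1) :
    (pderiv i P).totalDegree ≤ n := by
  conv_lhs => rw [P.as_sum]
  rw [map_sum]
  refine (totalDegree_finset_sum _ _).trans ?_
  apply Finset.sup_le
  intro s hs
  rw [pderiv_monomial]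
  by_cases h0 : s i = 0
  · simp [h0]
  · refine (totalDegree_monomial_le _ _).trans ?_
    have h2 : ((s - Finsupp.single i 1).sum fun _ e => e) + 1 = s.sum fun _ e => e := by
      conv_rhs => rw [← single_add_sub h0]
      rw [Finsupp.sum_add_index' (fun _ => rfl) (fun _ _ _ => rfl),
        Finsupp.sum_single_index rfl]
      omega
    have h3 : (s.sum fun _ e => e) ≤ n + 1 := le_trans (le_totalDegree hs) h
    have h4 : ((s - Finsupp.single i 1).sum fun x => id) = ((s - Finsupp.single i 1).sum fun _ e => e) := rfl
    omega


lemma pderiv_td_zero (i : σ) (P : MvPolynomial σ ℂ) (h : P.totalDegree = 0) :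
    pderiv i P = 0 := by
  conv_lhs => rw [P.as_sum]
  rw [map_sum]
  apply Finset.sum_eq_zero
  intro s hs
  rw [pderiv_monomial, (totalDegree_eq_zero_iff σ P).mp h s hs i]
  simp

/-- iterated pderiv along a list -/
def applyL (l : List σ) (P : MvPolynomial σ ℂ) : MvPolynomial σ ℂ :=
  l.foldr (fun i Q => pderiv i Q) P

lemma applyL_nil (P : MvPolynomial σ ℂ) : applyL [] P = P := rfl
lemma applyL_cons (i : σ) (l : List σ) (P : MvPolynomial σ ℂ) :
    applyL (i :: l) P = pderiv i (applyL l P) := rfl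

lemma applyL_td (l : List σ) (P : MvPolynomial σ ℂ) (n : ℕ)
    (h : P.totalDegree ≤ n + l.length) : (applyL l P).totalDegree ≤ n := by
  induction l generalizing n with
  | nil => simpa [applyL_nil] using h
  | cons i l ih =>
      rw [applyL_cons]
      apply td_pderiv
      apply ih
      rw [List.length_cons] at h
      omega

lemma applyL_zero (l : List σ) (P : MvPolynomial σ ℂ) (h : P.totalDegree < l.length) :
    applyL l P = 0 := by
  cases l with
  | nil => simp at h
  | cons i l =>
      rw [applyL_cons, pderiv_td_zero]
      have := applyL_td l P 0 (by simp at h ⊢; omega)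
      omega


end Poly

/-! tensor-level iterated derivatives -/

def applyT (m : ℕ) (l : List (Fin m)) (F : CPoly m) : CPoly m :=
  l.foldr (fun i G => pd m i G) F

lemma applyT_nil (m : ℕ) (F : CPoly m) : applyT m [] F = F := rfl
lemma applyT_cons (m : ℕ) (i : Fin m) (l : List (Fin m)) (F : CPoly m) :
    applyT m (i :: l) F = pd m i (applyT m l F) := rfl

lemma applyT_append_single (m : ℕ) (l : List (Fin m)) (i : Fin m) (F : CPoly m) :
    applyT m (l ++ [i]) F = applyT m l (pd m i F) := by
  simp [applyT, List.foldr_append]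

lemma applyT_zero (m : ℕ) (l : List (Fin m)) : applyT m l (0 : CPoly m) = 0 := by
  induction l with
  | nil => rfl
  | cons i l ih => rw [applyT_cons, ih, map_zero]

lemma applyT_add (m : ℕ) (l : List (Fin m)) (F G : CPoly m) :
    applyT m l (F + G) = applyT m l F + applyT m l G := by
  induction l with
  | nil => rfl
  | cons i l ih => rw [applyT_cons, ih, map_add, applyT_cons, applyT_cons]

lemma applyT_sum (m : ℕ) (l : List (Fin m)) {β : Type*} (s : Finset β) (f : β → CPoly m) :
    applyT m l (∑ b ∈ s, f b) = ∑ b ∈ s, applyT m l (f b) := by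
  classical
  induction s using Finset.induction_on with
  | empty => simp [applyT_zero]
  | insert _ _ hb ih => rw [Finset.sum_insert hb, applyT_add, ih, Finset.sum_insert hb]

lemma applyT_EC (m : ℕ) (l : List (Fin m)) (c : Cl m) (F : CPoly m) :
    applyT m l (EC m c F) = EC m c (applyT m l F) := by
  induction l with
  | nil => rfl
  | cons i l ih => rw [applyT_cons, ih, pd_EC, applyT_cons]

lemma applyT_tmul (m : ℕ) (l : List (Fin m)) (P : MvPolynomial (Fin m) ℂ) (a : Cl m) :
    applyT m l (P ⊗ₜ[ℂ] a) = (applyL l P) ⊗ₜ[ℂ] a := by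
  induction l with
  | nil => rfl
  | cons i l ih => rw [applyT_cons, ih, pd_tmul]; rfl

def pdvanish (m : ℕ) (N : ℕ) (F : CPoly m) : Prop :=
  ∀ l : List (Fin m), N ≤ l.length → applyT m l F = 0

lemma exists_pdvanish (m : ℕ) (F : CPoly m) : ∃ N, pdvanish m N F := by
  induction F using TensorProduct.induction_on with
  | zero => exact ⟨0, fun l _ => applyT_zero m l⟩
  | tmul P a =>
      refine ⟨P.totalDegree + 1, fun l hl => ?_⟩
      rw [applyT_tmul, applyL_zero l P (by omega), TensorProduct.zero_tmul]
  | add F G hF hG =>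
      obtain ⟨N1, h1⟩ := hF
      obtain ⟨N2, h2⟩ := hG
      refine ⟨max N1 N2, fun l hl => ?_⟩
      rw [applyT_add, h1 l (le_trans (le_max_left _ _) hl), h2 l (le_trans (le_max_right _ _) hl),
        add_zero]


/-! ### the `p,q` specific part -/

variable (p q : ℕ)

/-- index set of the last `q` variables -/
def S : Finset (Fin (p + q)) := Finset.univ.filter (fun i : Fin (p + q) => p ≤ (i : ℕ))



lemma card_S : (S p q).card = q := by
  have : S p q = Finset.map
      ⟨fun k : Fin q => (⟨p + k.1, by omega⟩ : Fin (p + q)),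
        fun a b hab => by
          have := congrArg Fin.val hab
          simp only at this
          exact Fin.ext (by omega)⟩ Finset.univ := by
    ext i
    simp only [S, Finset.mem_filter, Finset.mem_univ, true_and, Finset.mem_map,
      Function.Embedding.coeFn_mk]
    constructor
    · intro hi
      exact ⟨⟨i.1 - p, by omega⟩, Fin.ext (show p + (i.1 - p) = i.1 by omega)⟩
    · rintro ⟨k, rfl⟩
      exact Nat.le_add_right _ _
  rw [this, Finset.card_map, Finset.card_univ, Fintype.card_fin]

/-- the Dirac operator in the v-variables, as a linear map -/
def DL : CPoly (p + q) →ₗ[ℂ] CPoly (p + q) :=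
  ∑ i ∈ S p q, (EC (p + q) (gen (p + q) i)) ∘ₗ pd (p + q) i

/-- the v-Euler operator -/
def EvL : CPoly (p + q) →ₗ[ℂ] CPoly (p + q) :=
  ∑ i ∈ S p q, (MX (p + q) i) ∘ₗ pd (p + q) i

lemma DL_apply (F : CPoly (p + q)) :
    DL p q F = ∑ i ∈ S p q, EC (p + q) (gen (p + q) i) (pd (p + q) i F) := by
  rw [DL, LinearMap.sum_apply]; rfl

lemma EvL_apply (F : CPoly (p + q)) :
    EvL p q F = ∑ i ∈ S p q, MX (p + q) i (pd (p + q) i F) := by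
  rw [EvL, LinearMap.sum_apply]; rfl

lemma diracV_eq (F : CPoly (p + q)) : diracV p q F = DL p q F := by
  rw [diracV, DL_apply]
  apply Finset.sum_congr rfl
  intro i _
  rw [EC_apply]

lemma xE_mul (F : CPoly (p + q)) :
    xE (p + q) * F = ∑ j, MX (p + q) j (EC (p + q) (gen (p + q) j) F) := by
  rw [xE, Finset.sum_mul]
  apply Finset.sum_congr rfl
  intro j _
  rw [MX_apply, EC_apply, ← mul_assoc, Algebra.TensorProduct.tmul_mul_tmul, one_mul, mul_one]

lemma pair_lemma (i j : Fin (p + q)) (K : CPoly (p + q)) :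
    EC (p + q) (gen (p + q) i) (MX (p + q) j (EC (p + q) (gen (p + q) j) K))
      + MX (p + q) j (EC (p + q) (gen (p + q) j) (EC (p + q) (gen (p + q) i) K))
    = if i = j then -((2:ℂ) • MX (p + q) i K) else 0 := by
  rw [EC_MX_comm, ← map_add]
  by_cases h : i = j
  · subst h
    rw [if_pos rfl, EC_sq, show -K + -K = -((2:ℂ) • K) by rw [two_smul]; abel,
      map_neg, map_smul]
  · rw [if_neg h, EC_anti _ h, map_zero]

/-- Lemma A : `∂ᵥ(xF) = -q F - 2 Eᵥ F - x ∂ᵥ F`. -/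
lemma DL_x (F : CPoly (p + q)) :
    DL p q (xE (p + q) * F)
      = -((q : ℂ) • F) - (2:ℂ) • EvL p q F - xE (p + q) * DL p q F := by
  have expand : DL p q (xE (p + q) * F)
      = ∑ _i ∈ S p q, (-F)
        + ∑ i ∈ S p q, ∑ j, (EC (p + q) (gen (p + q) i))
            (MX (p + q) j (EC (p + q) (gen (p + q) j) (pd (p + q) i F))) := by
    rw [DL_apply, ← Finset.sum_add_distrib]
    refine Finset.sum_congr rfl (fun i _ => ?_)
    rw [xE_mul, map_sum, map_sum]
    have h1 : ∀ j : Fin (p + q),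
        (EC (p + q) (gen (p + q) i)) ((pd (p + q) i) ((MX (p + q) j) ((EC (p + q) (gen (p + q) j)) F)))
        = (if i = j then (EC (p + q) (gen (p + q) i)) ((EC (p + q) (gen (p + q) j)) F) else 0)
          + (EC (p + q) (gen (p + q) i))
              ((MX (p + q) j) ((EC (p + q) (gen (p + q) j)) ((pd (p + q) i) F))) := by
      intro j
      rw [pd_MX, map_add, apply_ite (EC (p + q) (gen (p + q) i)), map_zero, pd_EC]
    rw [Finset.sum_congr rfl (fun j _ => h1 j), Finset.sum_add_distrib, Finset.sum_ite_eq,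
      if_pos (Finset.mem_univ i), EC_sq]
  have e3 : xE (p + q) * DL p q F
      = ∑ i ∈ S p q, ∑ j, (MX (p + q) j)
          ((EC (p + q) (gen (p + q) j)) ((EC (p + q) (gen (p + q) i)) ((pd (p + q) i) F))) := by
    rw [xE_mul]
    have : ∀ j : Fin (p + q), (MX (p + q) j) ((EC (p + q) (gen (p + q) j)) (DL p q F))
        = ∑ i ∈ S p q, (MX (p + q) j)
            ((EC (p + q) (gen (p + q) j)) ((EC (p + q) (gen (p + q) i)) ((pd (p + q) i) F))) := by
      intro j
      rw [DL_apply, map_sum, map_sum]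
    rw [Finset.sum_congr rfl (fun j _ => this j), Finset.sum_comm]
  have e2 : (∑ i ∈ S p q, ∑ j, (EC (p + q) (gen (p + q) i))
        (MX (p + q) j (EC (p + q) (gen (p + q) j) (pd (p + q) i F))))
      + xE (p + q) * DL p q F = -((2:ℂ) • EvL p q F) := by
    rw [e3, ← Finset.sum_add_distrib]
    have : ∀ i ∈ S p q, (∑ j, (EC (p + q) (gen (p + q) i))
          (MX (p + q) j (EC (p + q) (gen (p + q) j) (pd (p + q) i F))))
        + ∑ j, (MX (p + q) j)
            ((EC (p + q) (gen (p + q) j)) ((EC (p + q) (gen (p + q) i)) ((pd (p + q) i) F)))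
        = -((2:ℂ) • MX (p + q) i (pd (p + q) i F)) := by
      intro i _
      rw [← Finset.sum_add_distrib,
        Finset.sum_congr rfl (fun j _ => pair_lemma p q i j (pd (p + q) i F)),
        Finset.sum_ite_eq, if_pos (Finset.mem_univ i)]
    rw [Finset.sum_congr rfl this, EvL_apply, Finset.smul_sum, ← Finset.sum_neg_distrib]
  rw [expand, Finset.sum_const, card_S, eq_sub_of_add_eq e2]
  have : (q : ℕ) • (-F) = -((q:ℂ) • F) := by
    rw [Nat.cast_smul_eq_nsmul, smul_neg]
  rw [this]
  abel

/-- Lemma B : `∂ᵥ Eᵥ = Eᵥ ∂ᵥ + ∂ᵥ`. -/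
lemma DL_Ev (F : CPoly (p + q)) :
    DL p q (EvL p q F) = EvL p q (DL p q F) + DL p q F := by
  have expand : DL p q (EvL p q F)
      = ∑ i ∈ S p q, ((EC (p + q) (gen (p + q) i)) (pd (p + q) i F)
          + ∑ j ∈ S p q, (EC (p + q) (gen (p + q) i))
              ((MX (p + q) j) ((pd (p + q) i) ((pd (p + q) j) F)))) := by
    rw [DL_apply]
    refine Finset.sum_congr rfl (fun i hi => ?_)
    rw [EvL_apply, map_sum, map_sum]
    have h1 : ∀ j : Fin (p + q),
        (EC (p + q) (gen (p + q) i)) ((pd (p + q) i) ((MX (p + q) j) ((pd (p + q) j) F)))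
        = (if i = j then (EC (p + q) (gen (p + q) i)) ((pd (p + q) j) F) else 0)
          + (EC (p + q) (gen (p + q) i)) ((MX (p + q) j) ((pd (p + q) i) ((pd (p + q) j) F))) := by
      intro j
      rw [pd_MX, map_add, apply_ite (EC (p + q) (gen (p + q) i)), map_zero]
    rw [Finset.sum_congr rfl (fun j _ => h1 j), Finset.sum_add_distrib, Finset.sum_ite_eq,
      if_pos hi]
  have e3 : EvL p q (DL p q F)
      = ∑ i ∈ S p q, ∑ j ∈ S p q, (MX (p + q) j)
          ((EC (p + q) (gen (p + q) i)) ((pd (p + q) j) ((pd (p + q) i) F))) := by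
    rw [EvL_apply]
    have : ∀ j ∈ S p q, (MX (p + q) j) ((pd (p + q) j) (DL p q F))
        = ∑ i ∈ S p q, (MX (p + q) j)
            ((EC (p + q) (gen (p + q) i)) ((pd (p + q) j) ((pd (p + q) i) F))) := by
      intro j _
      rw [DL_apply, map_sum, map_sum]
      exact Finset.sum_congr rfl (fun i _ => by rw [pd_EC])
    rw [Finset.sum_congr rfl this, Finset.sum_comm]
  rw [expand, Finset.sum_add_distrib, e3, DL_apply]
  have h4 : ∑ i ∈ S p q, ∑ j ∈ S p q,
        (EC (p + q) (gen (p + q) i)) ((MX (p + q) j) ((pd (p + q) i) ((pd (p + q) j) F)))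
      = ∑ i ∈ S p q, ∑ j ∈ S p q,
        (MX (p + q) j) ((EC (p + q) (gen (p + q) i)) ((pd (p + q) j) ((pd (p + q) i) F))) := by
    refine Finset.sum_congr rfl (fun i _ => Finset.sum_congr rfl (fun j _ => ?_))
    rw [EC_MX_comm, pd_pd]
  rw [h4]
  abel

/-- nilpotence of `DL` -/
lemma DL_pow_zero (n : ℕ) (F : CPoly (p + q)) (h : pdvanish (p + q) n F) :
    (DL p q ^ n) F = 0 := by
  induction n generalizing F with
  | zero =>
      simpa [applyT_nil] using h [] (by simp)
  | succ n ih =>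
      rw [pow_succ, Module.End.mul_apply]
      apply ih
      intro l hl
      rw [DL_apply, applyT_sum]
      apply Finset.sum_eq_zero
      intro i _
      rw [applyT_EC, ← applyT_append_single, h (l ++ [i]) (by simp; omega), map_zero]

/-- injectivity of `c + 2Eᵥ` -/
lemma cEv_inj (c : ℂ) (hc : ∀ k : ℕ, c + 2 * k ≠ 0) (K : CPoly (p + q))
    (h : c • K + (2:ℂ) • EvL p q K = 0) : K = 0 := by
  set T : MvPolynomial (Fin (p + q)) ℂ →ₗ[ℂ] MvPolynomial (Fin (p + q)) ℂ :=
    c • LinearMap.id + (2:ℂ) • Lv (S p q) with hT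
  have hrt : ∀ K : CPoly (p + q),
      LinearMap.rTensor (Cl (p + q)) T K = c • K + (2:ℂ) • EvL p q K := by
    intro K
    induction K using TensorProduct.induction_on with
    | zero => simp
    | tmul P a =>
        rw [LinearMap.rTensor_tmul, hT]
        have hEv : EvL p q (P ⊗ₜ[ℂ] a) = (Lv (S p q) P) ⊗ₜ[ℂ] a := by
          rw [EvL_apply, Lv, LinearMap.sum_apply, TensorProduct.sum_tmul]
          refine Finset.sum_congr rfl (fun i _ => ?_)
          rw [LinearMap.comp_apply, LinearMap.mulLeft_apply, MX_apply]
          have : pd (p + q) i (P ⊗ₜ[ℂ] a) = (pderiv i P) ⊗ₜ[ℂ] a := rfl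
          rw [this, Algebra.TensorProduct.tmul_mul_tmul, one_mul]
          rfl
        rw [hEv, LinearMap.add_apply, LinearMap.smul_apply, LinearMap.smul_apply,
          LinearMap.id_apply, TensorProduct.add_tmul, TensorProduct.smul_tmul',
          TensorProduct.smul_tmul']
    | add F G hF hG =>
        rw [map_add, hF, hG, map_add, smul_add, smul_add]
        abel
  have hinj : Function.Injective (LinearMap.rTensor (Cl (p + q)) T) :=
    Module.Flat.rTensor_preserves_injective_linearMap T (Lv_inj (S p q) c hc)
  have : LinearMap.rTensor (Cl (p + q)) T K = LinearMap.rTensor (Cl (p + q)) T 0 := by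
    rw [hrt, map_zero, h]
  exact hinj this

/-- step: even relation gives odd relation one level down -/
lemma step1 (c : ℂ) (K : CPoly (p + q))
    (h : c • K + (2:ℂ) • EvL p q K = -(xE (p + q) * DL p q K)) :
    (c + 2 - q) • DL p q K = xE (p + q) * DL p q (DL p q K) := by
  have hD := congrArg (DL p q) h
  rw [map_add, map_smul, map_smul, DL_Ev, map_neg, DL_x] at hD
  rw [← sub_eq_zero]
  rw [← sub_eq_zero] at hD
  rw [← hD]
  module

/-- step: odd relation gives even relation one level down -/
lemma step2 (c : ℂ) (K : CPoly (p + q))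
    (h : c • K = xE (p + q) * DL p q K) :
    (c + q) • DL p q K + (2:ℂ) • EvL p q (DL p q K)
      = -(xE (p + q) * DL p q (DL p q K)) := by
  have hD := congrArg (DL p q) h
  rw [map_smul, DL_x] at hD
  rw [← sub_eq_zero]
  rw [← sub_eq_zero] at hD
  rw [← hD]
  module



end Stmt16Aux

open Stmt16Aux in
theorem stmt16 (p q : ℕ) (hq : 1 ≤ q) (F G : CPoly (p + q))
    (hv : diracV p q F = 0) (hF : F = xE (p + q) * G) : F = 0 := by

  classical
  -- the base relation  q•G + 2EᵥG = -(x ∂ᵥG)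
  have hbase : (q:ℂ) • G + (2:ℂ) • EvL p q G = -(xE (p + q) * DL p q G) := by
    have h0 : DL p q (xE (p + q) * G) = 0 := by rw [← hF, ← diracV_eq, hv]
    rw [DL_x] at h0
    have e : (q:ℂ) • G + (2:ℂ) • EvL p q G - -(xE (p + q) * DL p q G)
        = -(-((q:ℂ) • G) - (2:ℂ) • EvL p q G - xE (p + q) * DL p q G) := by module
    rw [← sub_eq_zero, e, h0, neg_zero]
  set K : ℕ → CPoly (p + q) := fun n => (DL p q ^ n) G with hK
  have hK0 : K 0 = G := by simp [hK]
  have hKsucc : ∀ n, K (n + 1) = DL p q (K n) := by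
    intro n
    simp only [hK]
    rw [pow_succ', Module.End.mul_apply]
  have chain : ∀ n : ℕ,
      (((q:ℂ) + 2*n) • K (2*n) + (2:ℂ) • EvL p q (K (2*n)) = -(xE (p + q) * K (2*n+1)))
      ∧ ((2*(n:ℂ) + 2) • K (2*n+1) = xE (p + q) * K (2*n+2)) := by
    intro n
    induction n with
    | zero =>
        have hK1 : K (2*0+1) = DL p q G := by
          rw [show 2*0+1 = 0+1 by omega, hKsucc, hK0]
        have hK2 : K (2*0+2) = DL p q (DL p q G) := by
          rw [show 2*0+2 = (0+1)+1 by omega, hKsucc, hKsucc, hK0]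
        constructor
        · rw [show 2*0 = 0 by omega, hK0, hK1]
          rw [show (q:ℂ) + 2*((0:ℕ):ℂ) = (q:ℂ) by push_cast; ring]
          exact hbase
        · have h1 := step1 p q (q:ℂ) G hbase
          rw [hK1, hK2, show (2*((0:ℕ):ℂ) + 2) = (q:ℂ) + 2 - q by push_cast; ring]
          exact h1
    | succ n ih =>
        have hD22 : K (2*n+2) = DL p q (K (2*n+1)) := by
          rw [show 2*n+2 = (2*n+1)+1 by omega, hKsucc]
        have hD23 : K (2*n+3) = DL p q (K (2*n+2)) := by
          rw [show 2*n+3 = (2*n+2)+1 by omega, hKsucc]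
        have hD24 : K (2*n+4) = DL p q (K (2*n+3)) := by
          rw [show 2*n+4 = (2*n+3)+1 by omega, hKsucc]
        have godd := ih.2
        rw [hD22] at godd
        have heven := step2 p q (2*(n:ℂ)+2) (K (2*n+1)) godd
        rw [← hD22, ← hD23] at heven
        have idx1 : 2*(n+1) = 2*n+2 := by omega
        have idx2 : 2*(n+1)+1 = 2*n+3 := by omega
        have idx3 : 2*(n+1)+2 = 2*n+4 := by omega
        constructor
        · rw [idx2, idx1, show ((q:ℂ) + 2*((n+1:ℕ):ℂ)) = 2*(n:ℂ)+2+q by push_cast; ring]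
          exact heven
        · have heven2 := heven
          rw [hD23] at heven2
          have hodd := step1 p q (2*(n:ℂ)+2+q) (K (2*n+2)) heven2
          rw [← hD23, ← hD24] at hodd
          rw [idx2, idx3, show (2*(((n+1):ℕ):ℂ)+2) = (2*(n:ℂ)+2+q)+2-q by push_cast; ring]
          exact hodd
  -- nilpotence
  obtain ⟨N, hN⟩ := exists_pdvanish (p + q) G
  have hvan : ∀ n, N ≤ n → K n = 0 := by
    intro n hn
    exact DL_pow_zero p q n G (fun l hl => hN l (le_trans hn hl))
  have hdown : ∀ d n, N ≤ n + d → K n = 0 := by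
    intro d
    induction d with
    | zero => intro n hn; exact hvan n (by omega)
    | succ d ih =>
        intro n hn
        by_cases hcase : N ≤ n + d
        · exact ih n hcase
        · have hn1 : K (n+1) = 0 := ih (n+1) (by omega)
          rcases Nat.even_or_odd n with he | ho
          · obtain ⟨t, ht⟩ := he
            have ht2 : n = 2*t := by omega
            have hn1' : K (2*t+1) = 0 := by rw [show 2*t+1 = n+1 by omega]; exact hn1
            have heq := (chain t).1
            rw [hn1', mul_zero, neg_zero] at heq
            rw [ht2]
            refine cEv_inj p q ((q:ℂ) + 2*t) ?_ _ heq
            intro k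
            rw [show (q:ℂ) + 2*(t:ℂ) + 2*(k:ℕ) = ((q + 2*t + 2*k : ℕ) : ℂ) by push_cast; ring]
            exact Nat.cast_ne_zero.mpr (by omega)
          · obtain ⟨t, ht⟩ := ho
            have hn1' : K (2*t+2) = 0 := by rw [show 2*t+2 = n+1 by omega]; exact hn1
            have heq := (chain t).2
            rw [hn1', mul_zero] at heq
            have h2ne : (2*(t:ℂ) + 2) ≠ 0 := by
              rw [show 2*(t:ℂ) + 2 = ((2*t+2 : ℕ) : ℂ) by push_cast; ring]
              exact Nat.cast_ne_zero.mpr (by omega)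
            have h' := congrArg (fun z => (2*(t:ℂ)+2)⁻¹ • z) heq
            simp only [smul_smul, inv_mul_cancel₀ h2ne, one_smul, smul_zero] at h'
            rw [ht]
            exact h'
  have hG0 : G = 0 := by
    have := hdown N 0 (by omega)
    rwa [hK0] at this
  rw [hF, hG0, mul_zero]

end
end
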